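/- arXiv:1204.1024 — 5 statements merged into one kernel-verified Lean document; each statement's English description precedes it below -/
import Mathlib

section
/- For real x > 0 and y ∈ ℝ, the real part of ln Γ(x+iy) equals -γ_E x + Σ_{n=0}^∞ ( x/(n+1) - (1/2) ln((x+n)² + y²) + ln(n)·1_{n≥1} ), where γ_E is the Euler–Mascheroni constant. -/
open Complex Filter Topology Finset Nat

lemma bound_aux (x y t : ℝ) (hx : 0 < x) (ht : 1 ≤ t) :
    |x/(t+1) - (1/2)*Real.log ((x+t)^2+y^2) + Real.log t|
      ≤ ((2*x+x^2+y^2)^2/2 + x + (x^2+y^2)/2) / t^2 := by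
  have h0 : (0:ℝ) < t := lt_of_lt_of_le one_pos ht
  set u : ℝ := (2*x*t+x^2+y^2)/t^2 with hu_def
  have hu0 : 0 < u := by positivity
  have hpos : (0:ℝ) < 1+u := by linarith
  have hq : (x+t)^2+y^2 = (1+u)*t^2 := by rw [hu_def]; field_simp; ring
  have hlog : Real.log ((x+t)^2+y^2) = Real.log (1+u) + 2 * Real.log t := by
    rw [hq, Real.log_mul (by positivity) (by positivity), sq, Real.log_mul h0.ne' h0.ne']
    ring
  rw [hlog]
  have h1 : Real.log (1+u) ≤ u := by
    have := Real.log_le_sub_one_of_pos hpos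
    linarith
  have h2 : u - u^2 ≤ Real.log (1+u) := by
    have ha := Real.one_sub_inv_le_log_of_pos hpos
    have hinv : 1 - (1+u)⁻¹ = u/(1+u) := by field_simp; ring
    rw [hinv] at ha
    have h3 : u - u^2 ≤ u/(1+u) := by
      rw [le_div_iff₀ hpos]; nlinarith [hu0.le, sq_nonneg u]
    linarith
  have hub : u ≤ (2*x+x^2+y^2)/t := by
    rw [hu_def, div_le_div_iff₀ (by positivity) h0]
    nlinarith [mul_nonneg (by positivity : (0:ℝ) ≤ x^2+y^2) (by nlinarith : (0:ℝ) ≤ t^2 - t)]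
  have key1 : x/(t+1) ≤ x/t := by
    apply div_le_div_of_nonneg_left hx.le h0; linarith
  have key2 : x/t - x/(t+1) ≤ x/t^2 := by
    rw [div_sub_div _ _ h0.ne' (by linarith : (t+1) ≠ 0), div_le_div_iff₀ (by positivity) (by positivity)]
    nlinarith
  have hu_half : u/2 = x/t + (x^2+y^2)/(2*t^2) := by
    rw [hu_def]; field_simp; ring
  have hu2 : u^2 ≤ (2*x+x^2+y^2)^2/t^2 := by
    calc u^2 ≤ ((2*x+x^2+y^2)/t)^2 := by nlinarith
    _ = (2*x+x^2+y^2)^2/t^2 := by rw [div_pow]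
  have hsplit : ((2*x+x^2+y^2)^2/2 + x + (x^2+y^2)/2) / t^2
      = (2*x+x^2+y^2)^2/(2*t^2) + (x/t^2 + (x^2+y^2)/(2*t^2)) := by field_simp; ring
  have heq : x/(t+1) - (1/2)*(Real.log (1+u) + 2*Real.log t) + Real.log t
      = x/(t+1) - (1/2)*Real.log (1+u) := by ring
  rw [heq, abs_le, hsplit]
  have hnn : (0:ℝ) ≤ (2*x+x^2+y^2)^2/(2*t^2) := by positivity
  have hnn2 : (0:ℝ) ≤ (x^2+y^2)/(2*t^2) := by positivity
  have hnn3 : (0:ℝ) ≤ x/t^2 := by positivity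
  constructor
  · have hlow : -(x/t^2 + (x^2+y^2)/(2*t^2)) ≤ x/(t+1) - u/2 := by
      rw [hu_half]; linarith
    linarith
  · have h6 : u^2/2 ≤ (2*x+x^2+y^2)^2/(2*t^2) := by
      have hh : (2*x+x^2+y^2)^2/(2*t^2) = ((2*x+x^2+y^2)^2/t^2)/2 := by ring
      linarith
    have h5 : x/(t+1) - u/2 ≤ 0 := by rw [hu_half]; linarith
    linarith

lemma sum_log_nat_eq (m : ℕ) :
    ∑ n ∈ Finset.range (m+1), Real.log n = Real.log (m ! : ℝ) := by
  induction m with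
  | zero => simp
  | succ m ih =>
    rw [Finset.sum_range_succ, ih, Nat.factorial_succ, Nat.cast_mul]
    rw [Real.log_mul (by exact_mod_cast Nat.succ_ne_zero m)
      (by exact_mod_cast (Nat.factorial_pos m).ne')]
    push_cast
    ring

lemma log_abs_GammaSeq (x y : ℝ) (hx : 0 < x) (m : ℕ) (hm : 1 ≤ m) :
    Real.log (‖Complex.GammaSeq ((x:ℂ) + (y:ℂ)*I) m‖) =
      x * Real.log m + Real.log (m ! : ℝ)
        - ∑ j ∈ Finset.range (m+1), Real.log (‖(x:ℂ) + (y:ℂ)*I + j‖) := by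
  set z : ℂ := (x:ℂ) + (y:ℂ)*I with hz
  have hzre : ∀ j : ℕ, (z + j).re = x + j := by
    intro j; simp [hz]
  have hznz : ∀ j : ℕ, z + (j:ℂ) ≠ 0 := by
    intro j h
    have : (z + j).re = 0 := by rw [h]; simp
    rw [hzre j] at this
    have : (0:ℝ) < x + j := by positivity
    linarith
  have hm0 : (0:ℝ) < m := by exact_mod_cast hm
  have hA : ‖(m:ℂ) ^ z‖ = (m:ℝ) ^ x := by
    rw [show ((m:ℕ):ℂ) = (((m:ℝ)):ℂ) by push_cast; rfl,
      Complex.norm_cpow_eq_rpow_re_of_pos hm0]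
    congr 1
    simp [hz]
  have hB : ‖((m ! : ℕ) : ℂ)‖ = (m ! : ℝ) := Complex.norm_natCast _
  have hPne : ∀ j ∈ Finset.range (m+1), ‖z + j‖ ≠ 0 := by
    intro j _; exact norm_ne_zero_iff.mpr (hznz j)
  have hProdne : (∏ j ∈ Finset.range (m+1), ‖z + j‖) ≠ 0 :=
    Finset.prod_ne_zero_iff.mpr hPne
  rw [Complex.GammaSeq, norm_div, norm_mul, norm_prod, hA, hB,
    Real.log_div (by positivity) hProdne,
    Real.log_mul (by positivity) (by exact_mod_cast (Nat.factorial_pos m).ne'),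
    Real.log_rpow hm0, Real.log_prod hPne]

lemma log_abs_eq_half (w : ℂ) :
    Real.log (‖w‖) = (1/2) * Real.log (w.re^2 + w.im^2) := by
  have h : ‖w‖ ^ 2 = w.re^2 + w.im^2 := by
    rw [Complex.sq_norm, Complex.normSq_apply]; ring
  rw [← h, Real.log_pow]
  push_cast; ring

lemma summable_f (x y : ℝ) (hx : 0 < x) :
    Summable (fun n : ℕ => x/((n:ℝ)+1) - (1/2)*Real.log ((x+n)^2+y^2) + Real.log n) := by
  rw [← summable_nat_add_iff 1]
  set K := (2*x+x^2+y^2)^2/2 + x + (x^2+y^2)/2 with hK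
  have hs : Summable (fun n : ℕ => K / ((n:ℝ)+1)^2) := by
    have h1 : Summable (fun n : ℕ => 1 / (n:ℝ)^2) :=
      Real.summable_one_div_nat_pow.mpr one_lt_two
    have h2 := (summable_nat_add_iff 1).mpr h1
    have h3 : Summable (fun n : ℕ => 1 / ((n:ℝ)+1)^2) := by
      refine h2.congr fun n => ?_
      push_cast; ring
    simpa [div_eq_mul_inv, mul_comm] using h3.mul_left K
  refine hs.of_norm_bounded fun n => ?_
  have ht : (1:ℝ) ≤ ((n:ℝ)+1) := by have := Nat.cast_nonneg (α:=ℝ) n; linarith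
  have hb := bound_aux x y ((n:ℝ)+1) hx ht
  rw [Real.norm_eq_abs]
  convert hb using 3 <;> push_cast <;> ring
/-- For `x > 0` and `y ∈ ℝ`, the real part of `ln Γ(x+iy)` equals
`-γ_E x + Σ_{n=0}^∞ ( x/(n+1) - (1/2) ln((x+n)² + y²) + ln(n)·1_{n≥1} )`. -/
theorem re_log_Gamma_eq_tsum (x y : ℝ) (hx : 0 < x) :
    (Complex.log (Complex.Gamma ((x : ℂ) + (y : ℂ) * Complex.I))).re =
      -Real.eulerMascheroniConstant * x +
        ∑' n : ℕ, (x / ((n : ℝ) + 1) - (1 / 2) * Real.log ((x + n) ^ 2 + y ^ 2)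
          + if 1 ≤ n then Real.log n else 0) := by
  set z : ℂ := (x:ℂ) + (y:ℂ)*I with hzdef
  set f : ℕ → ℝ := fun n => x/((n:ℝ)+1) - (1/2)*Real.log ((x+n)^2+y^2) + Real.log n with hf
  set γ := Real.eulerMascheroniConstant with hγ
  have hif : ∀ n : ℕ, (x / ((n : ℝ) + 1) - (1 / 2) * Real.log ((x + n) ^ 2 + y ^ 2)
      + if 1 ≤ n then Real.log n else 0) = f n := by
    intro n
    rcases Nat.eq_zero_or_pos n with h | h
    · subst h; simp [hf]
    · rw [if_pos (Nat.one_le_iff_ne_zero.mpr h.ne')]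
  rw [tsum_congr hif]
  have hzre : z.re = x := by simp [hzdef]
  have hΓ : Complex.Gamma z ≠ 0 := Complex.Gamma_ne_zero_of_re_pos (by rw [hzre]; exact hx)
  have habs : ‖Complex.Gamma z‖ ≠ 0 := norm_ne_zero_iff.mpr hΓ
  have hsum := summable_f x y hx
  have htend2 : Tendsto (fun m : ℕ => ∑ n ∈ Finset.range (m+1), f n) atTop (𝓝 (∑' n, f n)) :=
    hsum.hasSum.tendsto_sum_nat.comp (tendsto_add_atTop_nat 1)
  have hident : ∀ m : ℕ, 1 ≤ m → ∑ n ∈ Finset.range (m+1), f n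
      = x * (((harmonic m : ℝ) - Real.log m) + 1/((m:ℝ)+1))
        + Real.log (‖Complex.GammaSeq z m‖) := by
    intro m hm
    have h1 : ∑ n ∈ Finset.range (m+1), f n
        = ((∑ n ∈ Finset.range (m+1), x/((n:ℝ)+1))
          - ∑ n ∈ Finset.range (m+1), (1/2)*Real.log ((x+n)^2+y^2))
          + ∑ n ∈ Finset.range (m+1), Real.log n := by
      rw [← Finset.sum_sub_distrib, ← Finset.sum_add_distrib]
    have hH : (∑ n ∈ Finset.range (m+1), x/((n:ℝ)+1))
        = x * ((harmonic m : ℝ) + 1/((m:ℝ)+1)) := by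
      have hc : ((harmonic (m+1) : ℚ) : ℝ) = ∑ n ∈ Finset.range (m+1), 1/((n:ℝ)+1) := by
        rw [harmonic]
        push_cast
        simp [one_div]
      have hc2 : ((harmonic (m+1) : ℚ) : ℝ) = (harmonic m : ℝ) + 1/((m:ℝ)+1) := by
        rw [harmonic_succ]
        push_cast
        ring
      rw [← hc2, hc, Finset.mul_sum]
      exact Finset.sum_congr rfl fun n _ => by ring
    have hLabs : ∀ n : ℕ, (1/2)*Real.log ((x+(n:ℝ))^2+y^2) = Real.log (‖z + n‖) := by
      intro n
      rw [log_abs_eq_half (z + n)]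
      congr 2 <;> simp [hzdef]
    have hsum2 : ∑ n ∈ Finset.range (m+1), (1/2)*Real.log ((x+(n:ℝ))^2+y^2)
        = ∑ n ∈ Finset.range (m+1), Real.log (‖z+n‖) :=
      Finset.sum_congr rfl fun n _ => hLabs n
    have hG := log_abs_GammaSeq x y hx m hm
    rw [← hzdef] at hG
    rw [h1, hH, hsum2, sum_log_nat_eq m, hG]
    ring
  have hlimG : Tendsto (fun m : ℕ => Real.log (‖Complex.GammaSeq z m‖)) atTop
      (𝓝 (Real.log (‖Complex.Gamma z‖))) :=
    (Real.continuousAt_log habs).tendsto.comp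
      ((continuous_norm.tendsto _).comp (Complex.GammaSeq_tendsto_Gamma z))
  have h1 : Tendsto (fun m : ℕ => (harmonic m : ℝ) - Real.log m) atTop (𝓝 γ) :=
    Real.tendsto_harmonic_sub_log
  have h2 : Tendsto (fun m : ℕ => 1/((m:ℝ)+1)) atTop (𝓝 0) :=
    tendsto_one_div_add_atTop_nhds_zero_nat
  have hlim : Tendsto (fun m : ℕ => x * (((harmonic m : ℝ) - Real.log m) + 1/((m:ℝ)+1))
        + Real.log (‖Complex.GammaSeq z m‖)) atTop
      (𝓝 (x * γ + Real.log (‖Complex.Gamma z‖))) := by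
    have := ((h1.add h2).const_mul x).add hlimG
    simpa using this
  have hlim' : Tendsto (fun m : ℕ => ∑ n ∈ Finset.range (m+1), f n) atTop
      (𝓝 (x * γ + Real.log (‖Complex.Gamma z‖))) := by
    apply hlim.congr'
    filter_upwards [eventually_ge_atTop 1] with m hm
    exact (hident m hm).symm
  have hts : ∑' n, f n = x * γ + Real.log (‖Complex.Gamma z‖) :=
    tendsto_nhds_unique htend2 hlim'
  rw [Complex.log_re, hts]
  ring
end

section
/- Fix θ > 0 and define g(x,y) = Re(ln Γ(x+iy)) + f_θ x - (κ_θ/2)(x² - y²) with κ_θ = Ψ'(θ) and f_θ = θΨ'(θ) - Ψ(θ). Then for all y > 0, d/dy [g(θ-y, y)] = -Σ_{n=0}^∞ 2y² / ((θ+n)((θ+n-y)² + y²)), and in particular the function y ↦ g(θ-y, y) is strictly decreasing on (0,∞). -/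
/-- The digamma function `Ψ(x) = d/dx ln Γ(x)`. -/
noncomputable def digamma (x : ℝ) : ℝ := deriv (fun t => Real.log (Real.Gamma t)) x

/-- `κ_θ = Ψ'(θ)`. -/
noncomputable def kappa (θ : ℝ) : ℝ := deriv digamma θ

/-- `f_θ = θΨ'(θ) - Ψ(θ)`. -/
noncomputable def fTheta (θ : ℝ) : ℝ := θ * deriv digamma θ - digamma θ

/-- `g(x,y) = Re(ln Γ(x+iy)) + f_θ x - (κ_θ/2)(x² - y²)`. -/
noncomputable def gFun (θ x y : ℝ) : ℝ :=
  (Complex.log (Complex.Gamma ((x : ℂ) + (y : ℂ) * Complex.I))).re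
    + fTheta θ * x - kappa θ / 2 * (x ^ 2 - y ^ 2)

section AuxDigamma

open Filter Topology Finset

lemma tuo_shift {f : ℕ → ℝ → ℝ} {g : ℝ → ℝ} {s : Set ℝ}
    (h : TendstoUniformlyOn f g atTop s) :
    TendstoUniformlyOn (fun n => f (n + 1)) g atTop s :=
  fun u hu => (tendsto_add_atTop_nat 1).eventually (h u hu)

lemma tuo_const {c : ℕ → ℝ} {L : ℝ} (h : Tendsto c atTop (𝓝 L)) (s : Set ℝ) :
    TendstoUniformlyOn (fun n (_ : ℝ) => c n) (fun _ => L) atTop s := by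
  rw [Metric.tendstoUniformlyOn_iff]
  intro ε hε
  filter_upwards [Metric.tendsto_nhds.mp h ε hε] with n hn x _
  rw [dist_comm]; exact hn

lemma summable_sq_aux {a : ℝ} (ha : 0 < a) :
    Summable (fun k : ℕ => 1 / ((a + k) * (a + k))) := by
  have base : Summable (fun k : ℕ => 1/((k:ℝ)+1)^2) := by
    have := (summable_nat_add_iff (f := fun n : ℕ => 1/((n:ℝ)^2)) 1).mpr ?_
    · exact this.congr fun n => by push_cast; ring
    · norm_num [Real.summable_one_div_nat_pow]
  have base2 : Summable (fun k : ℕ => (1 / (min a 1)^2) * (1/((k:ℝ)+1)^2)) := base.mul_left _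
  refine Summable.of_nonneg_of_le (fun k => by positivity) (fun k => ?_) base2
  have h1 : min a 1 * ((k:ℝ)+1) ≤ a + k := by
    rcases min_cases a 1 with ⟨h, h'⟩ | ⟨h, h'⟩ <;> rw [h] <;> nlinarith [Nat.cast_nonneg (α := ℝ) k]
  have h2 : (0:ℝ) < min a 1 * ((k:ℝ)+1) := by positivity
  have h3 : (min a 1 * ((k:ℝ)+1)) * (min a 1 * ((k:ℝ)+1)) ≤ (a+k) * (a+k) :=
    mul_le_mul h1 h1 h2.le (by positivity)
  calc 1 / ((a + k) * (a + k)) ≤ 1 / ((min a 1 * ((k:ℝ)+1)) * (min a 1 * ((k:ℝ)+1))) :=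
        one_div_le_one_div_of_le (by positivity) h3
    _ = (1 / (min a 1)^2) * (1/((k:ℝ)+1)^2) := by
        rw [div_mul_div_comm]; congr 1 <;> ring

lemma harmonic_cast (m : ℕ) :
    ((harmonic m : ℚ) : ℝ) = ∑ k ∈ Finset.range m, 1/(1+(k:ℝ)) := by
  rw [harmonic]
  push_cast
  refine Finset.sum_congr rfl fun k _ => ?_
  rw [one_div, add_comm]

lemma c_tendsto :
    Tendsto (fun n : ℕ => Real.log n - ∑ k ∈ Finset.range (n+1), 1/(1+(k:ℝ)))
      atTop (𝓝 (-Real.eulerMascheroniConstant)) := by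
  have h1 : Tendsto (fun n : ℕ => -Real.eulerMascheroniSeq' (n+1) - Real.log (1 + 1/(n:ℝ)))
      atTop (𝓝 (-Real.eulerMascheroniConstant)) := by
    have hA : Tendsto (fun n : ℕ => Real.eulerMascheroniSeq' (n+1)) atTop
        (𝓝 Real.eulerMascheroniConstant) :=
      Real.tendsto_eulerMascheroniSeq'.comp (tendsto_add_atTop_nat 1)
    have hB : Tendsto (fun n : ℕ => Real.log (1 + 1/(n:ℝ))) atTop (𝓝 0) := by
      have : Tendsto (fun n : ℕ => 1 + 1/(n:ℝ)) atTop (𝓝 1) := by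
        simpa using tendsto_const_nhds.add (tendsto_one_div_atTop_nhds_zero_nat (𝕜 := ℝ))
      simpa [Function.comp_def] using (Real.continuousAt_log one_ne_zero).tendsto.comp this
    simpa using hA.neg.sub hB
  refine h1.congr' ?_
  filter_upwards [eventually_ge_atTop 1] with n hn
  have hn0 : (0:ℝ) < n := by exact_mod_cast hn
  have e1 : Real.eulerMascheroniSeq' (n+1) = harmonic (n+1) - Real.log (n+1) := by
    rw [Real.eulerMascheroniSeq']
    simp [Nat.succ_ne_zero]
  have e2 : Real.log (1 + 1/(n:ℝ)) = Real.log ((n:ℝ)+1) - Real.log n := by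
    rw [← Real.log_div (by positivity) hn0.ne']
    congr 1
    field_simp
  rw [e1, e2, harmonic_cast]
  push_cast
  ring

noncomputable def digammaSeries (θ : ℝ) : ℝ :=
  -Real.eulerMascheroniConstant + ∑' k : ℕ, (1/(1+(k:ℝ)) - 1/(θ+k))

lemma partA {θ : ℝ} (hθ : 0 < θ) :
    HasDerivAt (fun t => Real.log (Real.Gamma t)) (digammaSeries θ) θ ∧
    Tendsto (fun n : ℕ => Real.log n - ∑ k ∈ Finset.range (n+1), 1/(θ+(k:ℝ)))
      atTop (𝓝 (digammaSeries θ)) := by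
  set s : Set ℝ := Set.Ioo (θ/2) (θ+1) with hs_def
  have hθs : θ ∈ s := ⟨by linarith, by linarith⟩
  have hpos : ∀ t ∈ s, ∀ k : ℕ, 0 < t + k := by
    intro t ht k
    have := ht.1
    have : (0:ℝ) ≤ k := Nat.cast_nonneg k
    nlinarith
  set m : ℝ := min 1 (θ/2) with hm_def
  have hm : 0 < m := lt_min one_pos (by linarith)
  -- the function sequence and its derivatives
  set f : ℕ → ℝ → ℝ := fun n t =>
    t * Real.log n + Real.log ((Nat.factorial n)) - ∑ k ∈ Finset.range (n+1), Real.log (t+k) with hf_def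
  set f' : ℕ → ℝ → ℝ := fun n t =>
    Real.log n - ∑ k ∈ Finset.range (n+1), 1/(t+k) with hf'_def
  set g' : ℝ → ℝ := fun t =>
    -Real.eulerMascheroniConstant + ∑' k : ℕ, (1/(1+(k:ℝ)) - 1/(t+k)) with hg'_def
  -- HasDerivAt for each n
  have hderiv : ∀ n : ℕ, ∀ t ∈ s, HasDerivAt (f n) (f' n t) t := by
    intro n t ht
    have h1 : HasDerivAt (fun t : ℝ => t * Real.log n + Real.log ((Nat.factorial n))) (Real.log n) t := by
      simpa using ((hasDerivAt_id t).mul_const (Real.log n)).add_const (Real.log ((Nat.factorial n)))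
    have h2 : HasDerivAt (fun t : ℝ => ∑ k ∈ Finset.range (n+1), Real.log (t+k))
        (∑ k ∈ Finset.range (n+1), 1/(t+k)) t := by
      apply HasDerivAt.fun_sum
      intro k _
      have := (((hasDerivAt_id t).add_const (k:ℝ)).log (hpos t ht k).ne')
      simpa using this
    have h3 := h1.fun_sub h2
    simp only [hf_def, hf'_def]
    simpa [one_div] using h3
  -- uniform convergence of derivatives
  have hunif : TendstoUniformlyOn f' g' atTop s := by
    have hc : TendstoUniformlyOn
        (fun (n : ℕ) (_ : ℝ) => Real.log n - ∑ k ∈ Finset.range (n+1), 1/(1+(k:ℝ)))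
        (fun _ => -Real.eulerMascheroniConstant) atTop s := tuo_const c_tendsto s
    have hsum : TendstoUniformlyOn
        (fun n t => ∑ k ∈ Finset.range n, (1/(1+(k:ℝ)) - 1/(t+k)))
        (fun t => ∑' k : ℕ, (1/(1+(k:ℝ)) - 1/(t+k))) atTop s := by
      apply tendstoUniformlyOn_tsum_nat ((summable_sq_aux hm).mul_left (θ+1))
      intro k t ht
      have hk1 : (0:ℝ) < 1 + k := by positivity
      have htk : 0 < t + k := hpos t ht k
      have heq : 1/(1+(k:ℝ)) - 1/(t+k) = (t-1) / ((1+k)*(t+k)) := by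
        rw [div_sub_div _ _ hk1.ne' htk.ne']
        congr 1
        ring
      rw [Real.norm_eq_abs, heq, abs_div, abs_of_pos (mul_pos hk1 htk), mul_one_div]
      have hnum : |t - 1| ≤ θ + 1 := by
        rw [abs_le]
        constructor <;> [linarith [ht.1]; linarith [ht.2]]
      have hden : (m + k) * (m + k) ≤ (1+(k:ℝ)) * (t+k) := by
        have l1 : m + k ≤ 1 + (k:ℝ) := by
          have : m ≤ 1 := min_le_left _ _
          linarith
        have l2 : m + k ≤ t + k := by
          have : m ≤ θ/2 := min_le_right _ _
          linarith [ht.1]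
        have : (0:ℝ) < m + k := by positivity
        exact mul_le_mul l1 l2 this.le (by positivity)
      exact div_le_div₀ (by linarith) hnum (by positivity) hden
    have := hc.add (tuo_shift hsum)
    refine this.congr ?_ |>.congr_right ?_
    · filter_upwards with n
      intro t ht
      simp only [Pi.add_apply, hf'_def]
      rw [Finset.sum_sub_distrib]
      ring
    · intro t ht
      simp only [Pi.add_apply, hg'_def]
  -- pointwise convergence
  have hptwise : ∀ t ∈ s, Tendsto (fun n => f n t) atTop (𝓝 (Real.log (Real.Gamma t))) := by
    intro t ht
    have ht0 : 0 < t := lt_trans (by linarith) ht.1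
    have hG : Tendsto (fun n => Real.log (Real.GammaSeq t n)) atTop
        (𝓝 (Real.log (Real.Gamma t))) :=
      ((Real.continuousAt_log (Real.Gamma_pos_of_pos ht0).ne').tendsto).comp
        (Real.GammaSeq_tendsto_Gamma t)
    refine hG.congr' ?_
    filter_upwards [eventually_ge_atTop 1] with n hn
    have hn0 : (0:ℝ) < n := by exact_mod_cast hn
    have hprod : (0:ℝ) < ∏ j ∈ Finset.range (n+1), (t + j) :=
      Finset.prod_pos fun j _ => hpos t ht j
    rw [Real.GammaSeq, Real.log_div (by positivity) hprod.ne',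
      Real.log_mul (by positivity) (by positivity), Real.log_rpow hn0,
      Real.log_prod (fun j _ => (hpos t ht j).ne')]
  -- conclude
  have hmain : HasDerivAt (fun t => Real.log (Real.Gamma t)) (g' θ) θ :=
    hasDerivAt_of_tendstoUniformlyOn isOpen_Ioo hunif
      (Filter.Eventually.of_forall hderiv) hptwise hθs
  have hval : g' θ = digammaSeries θ := rfl
  refine ⟨hval ▸ hmain, ?_⟩
  have := hunif.tendsto_at hθs
  rw [hval] at this
  exact this
lemma summable_p {θ y : ℝ} (hθ : 0 < θ) {a b : ℝ} (ha : 0 < a) (hab : a < b) :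
    Summable (fun k : ℕ => 2*b^2 / ((θ+k) * (max (θ+k-b) a)^2)) := by
  set K : ℕ := Nat.ceil b with hK
  have hKb : b ≤ K := Nat.le_ceil b
  rw [← summable_nat_add_iff K]
  have hcomp : ∀ k : ℕ, 2*b^2 / ((θ+(k+K:ℕ)) * (max (θ+(k+K:ℕ)-b) a)^2)
      ≤ (2*b^2/θ) * (1 / ((θ+k)*(θ+k))) := by
    intro k
    have hθk : (0:ℝ) < θ + k := by positivity
    have h1 : θ + k ≤ θ + (k+K:ℕ) - b + 0 := by
      push_cast
      linarith
    have h2 : θ + k ≤ max (θ+(k+K:ℕ)-b) a := by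
      refine le_trans (by linarith) (le_max_left _ _)
    have h3 : (θ+k)*(θ+k) ≤ (max (θ+(k+K:ℕ)-b) a)^2 := by
      rw [pow_two]
      exact mul_le_mul h2 h2 hθk.le (le_trans hθk.le h2)
    have h4 : θ ≤ θ + (k+K:ℕ) := by
      have : (0:ℝ) ≤ (k+K:ℕ) := Nat.cast_nonneg _
      linarith
    have h5 : θ * ((θ+k)*(θ+k)) ≤ (θ+(k+K:ℕ)) * (max (θ+(k+K:ℕ)-b) a)^2 :=
      mul_le_mul h4 h3 (by positivity) (by positivity)
    calc 2*b^2 / ((θ+(k+K:ℕ)) * (max (θ+(k+K:ℕ)-b) a)^2)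
        ≤ 2*b^2 / (θ * ((θ+k)*(θ+k))) :=
          div_le_div₀ (by positivity) le_rfl (by positivity) h5
      _ = (2*b^2/θ) * (1 / ((θ+k)*(θ+k))) := by
          rw [div_mul_div_comm, mul_one, ← div_div]
  refine Summable.of_nonneg_of_le (fun k => by positivity) hcomp ?_
  exact ((summable_sq_aux hθ).mul_left _)
lemma abs_sq_bound {θ a b x : ℝ} (hθ : 0 < θ) (ha : 0 < a) (hx : x ∈ Set.Ioo a b) (k : ℕ) :
    2*x^2 / ((θ+k) * ((θ+k-x)^2 + x^2)) ≤ 2*b^2 / ((θ+k) * (max (θ+k-b) a)^2) := by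
  have hθk : (0:ℝ) < θ + k := by positivity
  have hD : (0:ℝ) < (θ+k-x)^2 + x^2 := by
    have : 0 < x := lt_trans ha hx.1
    positivity
  have hnum : 2*x^2 ≤ 2*b^2 := by nlinarith [hx.1, hx.2, ha]
  have hden : (max (θ+k-b) a)^2 ≤ (θ+k-x)^2 + x^2 := by
    rcases max_cases (θ+k-b) a with ⟨h, h'⟩ | ⟨h, h'⟩ <;> rw [h]
    · -- max = θ+k-b, with a ≤ θ+k-b
      have h1 : 0 ≤ θ + k - b := le_trans ha.le h'
      have h2 : θ+k-b ≤ θ+k-x := by linarith [hx.2]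
      nlinarith
    · -- max = a, a > θ+k-b; use x^2 > a^2
      nlinarith [hx.1, sq_nonneg (θ+k-x)]
  exact div_le_div₀ (by positivity) hnum (by positivity)
    (mul_le_mul le_rfl hden (by positivity) hθk.le)

lemma summable_p_at {θ y : ℝ} (hθ : 0 < θ) (hy : 0 < y) :
    Summable (fun k : ℕ => 2*y^2 / ((θ+k) * ((θ+k-y)^2 + y^2))) := by
  have h := summable_p (y := y) hθ (half_pos hy) (show y/2 < y+1 by linarith)
  refine Summable.of_nonneg_of_le (fun k => ?_) (fun k => ?_) h
  · have hD : (0:ℝ) < (θ+k-y)^2 + y^2 := by positivity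
    positivity
  · exact abs_sq_bound hθ (half_pos hy) ⟨by linarith, by linarith⟩ k

lemma partB {θ : ℝ} (hθ : 0 < θ) {y : ℝ} (hy : 0 < y) :
    HasDerivAt (fun x : ℝ =>
        Real.log ‖Complex.Gamma (((θ - x : ℝ) : ℂ) + (x : ℝ) * Complex.I)‖)
      (-(digammaSeries θ) - ∑' k : ℕ, 2*y^2 / ((θ+k) * ((θ+k-y)^2 + y^2))) y := by
  set a : ℝ := y/2 with ha_def
  set b : ℝ := y+1 with hb_def
  have ha : 0 < a := half_pos hy
  set s : Set ℝ := Set.Ioo a b with hs_def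
  have hys : y ∈ s := ⟨by simp [ha_def]; linarith, by simp [hb_def]⟩
  have hxpos : ∀ x ∈ s, 0 < x := fun x hx => lt_trans ha hx.1
  have hD : ∀ x ∈ s, ∀ k : ℕ, (0:ℝ) < (θ+k-x)^2 + x^2 := by
    intro x hx k
    have := hxpos x hx
    positivity
  have hθk : ∀ k : ℕ, (0:ℝ) < θ + k := fun k => by positivity
  set f : ℕ → ℝ → ℝ := fun n x =>
    (θ - x) * Real.log n + Real.log (Nat.factorial n)
      - ∑ k ∈ Finset.range (n+1), Real.log ((θ+k-x)^2 + x^2) / 2 with hf_def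
  set f' : ℕ → ℝ → ℝ := fun n x =>
    -(Real.log n - ∑ k ∈ Finset.range (n+1), 1/(θ+(k:ℝ)))
      - ∑ k ∈ Finset.range (n+1), 2*x^2 / ((θ+k) * ((θ+k-x)^2 + x^2)) with hf'_def
  set g' : ℝ → ℝ := fun x =>
    -(digammaSeries θ) - ∑' k : ℕ, 2*x^2 / ((θ+k) * ((θ+k-x)^2 + x^2)) with hg'_def
  have hderiv : ∀ n : ℕ, ∀ x ∈ s, HasDerivAt (f n) (f' n x) x := by
    intro n x hx
    have h1 : HasDerivAt (fun x : ℝ => (θ - x) * Real.log n + Real.log (Nat.factorial n))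
        (-Real.log n) x := by
      simpa using (((hasDerivAt_id x).const_sub θ).mul_const (Real.log n)).add_const
        (Real.log (Nat.factorial n))
    have h2 : HasDerivAt (fun x : ℝ => ∑ k ∈ Finset.range (n+1), Real.log ((θ+k-x)^2 + x^2) / 2)
        (∑ k ∈ Finset.range (n+1), (2*x - (θ+k)) / ((θ+k-x)^2 + x^2)) x := by
      apply HasDerivAt.fun_sum
      intro k _
      have hin : HasDerivAt (fun x : ℝ => (θ+k-x)^2 + x^2)
          (2*(θ+k-x)^1*(-1) + 2*x^1) x := by
        exact (((hasDerivAt_id x).const_sub (θ+k)).fun_pow 2).add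
          ((hasDerivAt_pow 2 x).congr_deriv (by ring))
      have hd2 := (hin.log (hD x hx k).ne').div_const 2
      have heq : (2*(θ+k-x)^1*(-1) + 2*x^1) / ((θ+k-x)^2+x^2) / 2
          = (2*x - (θ+k)) / ((θ+k-x)^2 + x^2) := by
        rw [div_div, div_eq_div_iff (mul_pos (hD x hx k) two_pos).ne' (hD x hx k).ne']
        ring
      exact heq ▸ hd2
    have h3 := h1.fun_sub h2
    simp only [hf_def, hf'_def]
    refine h3.congr_deriv (Eq.symm ?_)
    have hterm : ∀ k ∈ Finset.range (n+1),
        1/(θ+(k:ℝ)) - 2*x^2 / ((θ+k) * ((θ+k-x)^2 + x^2))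
          = -((2*x - (θ+k)) / ((θ+k-x)^2 + x^2)) := by
      intro k _
      have hDk : ((θ+(k:ℝ)-x)^2 + x^2) ≠ 0 := (hD x hx k).ne'
      have hθk' : (θ+(k:ℝ)) ≠ 0 := (hθk k).ne'
      field_simp
      ring
    calc -(Real.log n - ∑ k ∈ Finset.range (n+1), 1/(θ+(k:ℝ)))
          - ∑ k ∈ Finset.range (n+1), 2*x^2 / ((θ+k) * ((θ+k-x)^2 + x^2))
        = -Real.log n + ∑ k ∈ Finset.range (n+1),
            (1/(θ+(k:ℝ)) - 2*x^2 / ((θ+k) * ((θ+k-x)^2 + x^2))) := by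
          rw [Finset.sum_sub_distrib]; ring
      _ = -Real.log n + ∑ k ∈ Finset.range (n+1), -((2*x - (θ+k)) / ((θ+k-x)^2 + x^2)) := by
          rw [Finset.sum_congr rfl hterm]
      _ = -Real.log n - ∑ k ∈ Finset.range (n+1), (2*x - (θ+k)) / ((θ+k-x)^2 + x^2) := by
          rw [Finset.sum_neg_distrib]; ring
  have hunif : TendstoUniformlyOn f' g' atTop s := by
    have hc := tuo_const (c := fun n : ℕ =>
      -(Real.log n - ∑ k ∈ Finset.range (n+1), 1/(θ+(k:ℝ)))) ((partA hθ).2.neg) s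
    have hsum : TendstoUniformlyOn
        (fun n x => ∑ k ∈ Finset.range n, 2*x^2 / ((θ+k) * ((θ+k-x)^2 + x^2)))
        (fun x => ∑' k : ℕ, 2*x^2 / ((θ+k) * ((θ+k-x)^2 + x^2))) atTop s := by
      apply tendstoUniformlyOn_tsum_nat (summable_p (y := y) (b := b) hθ ha (by linarith [ha_def, hb_def]))
      intro k x hx
      have h0 : (0:ℝ) < x := hxpos x hx
      have hDk := hD x hx k
      rw [Real.norm_eq_abs, abs_of_nonneg (by positivity)]
      exact abs_sq_bound hθ ha hx k
    have hadd := hc.sub (tuo_shift hsum)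
    refine hadd.congr ?_ |>.congr_right ?_
    · filter_upwards with n
      intro x hx
      simp only [Pi.sub_apply, hf'_def]
    · intro x hx
      simp only [Pi.sub_apply, hg'_def]
  have hptwise : ∀ x ∈ s, Tendsto (fun n => f n x) atTop
      (𝓝 (Real.log ‖Complex.Gamma (((θ - x : ℝ) : ℂ) + (x : ℝ) * Complex.I)‖)) := by
    intro x hx
    have h0 : (0:ℝ) < x := hxpos x hx
    set z : ℂ := ((θ - x : ℝ) : ℂ) + (x : ℝ) * Complex.I with hz_def
    have hre : z.re = θ - x := by simp [hz_def]
    have him : z.im = x := by simp [hz_def]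
    have hz_ne : ∀ m : ℕ, z ≠ -m := by
      intro m h
      apply_fun Complex.im at h
      rw [him] at h
      simp at h
      exact h0.ne' h
    have hΓ : Complex.Gamma z ≠ 0 := Complex.Gamma_ne_zero hz_ne
    have habs : 0 < ‖Complex.Gamma z‖ := norm_pos_iff.mpr hΓ
    have hG : Tendsto (fun n => Real.log ‖Complex.GammaSeq z n‖) atTop
        (𝓝 (Real.log (‖Complex.Gamma z‖))) :=
      ((Real.continuousAt_log habs.ne').tendsto).comp
        ((continuous_norm.tendsto _).comp (Complex.GammaSeq_tendsto_Gamma z))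
    refine hG.congr' ?_
    filter_upwards [eventually_ge_atTop 1] with n hn
    have hn0 : (0:ℝ) < n := by exact_mod_cast hn
    have hD' : ∀ j : ℕ, (0:ℝ) < (θ+j-x)^2 + x^2 := hD x hx
    have habsj : ∀ j : ℕ, ‖z + j‖ = Real.sqrt ((θ+j-x)^2 + x^2) := by
      intro j
      rw [Complex.norm_def, Complex.normSq_apply]
      have h1 : (z + j).re = θ - x + j := by simp [hre]
      have h2 : (z + j).im = x := by simp [him]
      rw [h1, h2]
      congr 1
      ring
    have hprodpos : (0:ℝ) < ∏ j ∈ Finset.range (n+1), Real.sqrt ((θ+j-x)^2 + x^2) :=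
      Finset.prod_pos fun j _ => Real.sqrt_pos.mpr (hD' j)
    have hfacpos : (0:ℝ) < (Nat.factorial n : ℝ) := by
      exact_mod_cast Nat.factorial_pos n
    rw [Complex.GammaSeq, norm_div, norm_mul, norm_prod]
    have e1 : ‖(n:ℂ) ^ z‖ = (n:ℝ) ^ (θ - x) := by
      rw [← Complex.ofReal_natCast, Complex.norm_cpow_eq_rpow_re_of_pos hn0, hre]
    rw [e1, Complex.norm_natCast, Finset.prod_congr rfl (fun j _ => habsj j)]
    have hrp : (0:ℝ) < (n:ℝ) ^ (θ - x) := Real.rpow_pos_of_pos hn0 _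
    rw [Real.log_div (by positivity) hprodpos.ne',
      Real.log_mul hrp.ne' hfacpos.ne', Real.log_rpow hn0,
      Real.log_prod (fun j _ => (Real.sqrt_pos.mpr (hD' j)).ne')]
    simp only [hf_def]
    rw [Finset.sum_congr rfl (fun j _ => Real.log_sqrt (hD' j).le)]
  exact hasDerivAt_of_tendstoUniformlyOn isOpen_Ioo hunif
    (Filter.Eventually.of_forall hderiv) hptwise hys

end AuxDigamma

/-- For `θ > 0` and `y > 0`,
`d/dy [g(θ-y, y)] = -Σ_{n=0}^∞ 2y² / ((θ+n)((θ+n-y)² + y²))`, and in particular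
`y ↦ g(θ-y, y)` is strictly decreasing on `(0,∞)`. -/
theorem gFun_antidiag_deriv_and_strictAnti (θ : ℝ) (hθ : 0 < θ) :
    (∀ y : ℝ, 0 < y →
      HasDerivAt (fun y => gFun θ (θ - y) y)
        (-(∑' n : ℕ, 2 * y ^ 2 / ((θ + n) * ((θ + n - y) ^ 2 + y ^ 2)))) y)
    ∧ StrictAntiOn (fun y => gFun θ (θ - y) y) (Set.Ioi 0) := by
  have key : ∀ y : ℝ, 0 < y →
      HasDerivAt (fun y => gFun θ (θ - y) y)
        (-(∑' n : ℕ, 2 * y ^ 2 / ((θ + n) * ((θ + n - y) ^ 2 + y ^ 2)))) y := by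
    intro y hy
    have hB := partB hθ hy
    have h1 : HasDerivAt (fun x : ℝ => θ - x) (-1) y := (hasDerivAt_id y).const_sub θ
    have hpoly : HasDerivAt
        (fun x : ℝ => fTheta θ * (θ - x) - kappa θ / 2 * ((θ - x) ^ 2 - x ^ 2))
        (fTheta θ * (-1) - kappa θ / 2 * (2*(θ-y)^1*(-1) - 2*y^1)) y := by
      have h2 := ((h1.fun_pow 2).fun_sub (hasDerivAt_pow 2 y)).const_mul (kappa θ / 2)
      have h3 := (h1.const_mul (fTheta θ)).fun_sub h2
      refine h3.congr_deriv ?_; norm_num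
    have hsum := hB.fun_add hpoly
    have hfun : (fun y => gFun θ (θ - y) y) = fun x =>
        Real.log ‖Complex.Gamma (((θ - x : ℝ) : ℂ) + (x : ℝ) * Complex.I)‖
          + (fTheta θ * (θ - x) - kappa θ / 2 * ((θ - x) ^ 2 - x ^ 2)) := by
      funext x
      rw [gFun, Complex.log_re]
      ring
    rw [hfun]
    refine hsum.congr_deriv (Eq.symm ?_)
    have hdig : digamma θ = digammaSeries θ := (partA hθ).1.deriv
    rw [fTheta, kappa, ← hdig]
    ring
  refine ⟨key, ?_⟩
  have hcont : ContinuousOn (fun y => gFun θ (θ - y) y) (Set.Ioi 0) :=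
    fun x hx => ((key x hx).continuousAt).continuousWithinAt
  refine strictAntiOn_of_deriv_neg (convex_Ioi 0) hcont ?_
  intro x hx
  rw [interior_Ioi] at hx
  rw [(key x hx).deriv, neg_lt_zero]
  have hx0 : (0:ℝ) < x := hx
  have hterm : ∀ k : ℕ, 0 < 2 * x ^ 2 / ((θ + k) * ((θ + k - x) ^ 2 + x ^ 2)) := by
    intro k
    have h1 : (0:ℝ) < θ + k := add_pos_of_pos_of_nonneg hθ (Nat.cast_nonneg k)
    have h2 : (0:ℝ) < (θ + k - x) ^ 2 + x ^ 2 := by positivity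
    positivity
  exact Summable.tsum_pos (summable_p_at hθ hx0) (fun k => (hterm k).le) 0 (hterm 0)
end

section
/- For complex S with positive real part and complex u with 0 < Re(u) < 1, one has π S^u / sin(πu) = ∫_ℝ S e^{ut} / (S + e^t) dt, where S^u is defined with respect to the principal branch. -/
open Complex MeasureTheory Set Filter Topology

private lemma sin_pi_mul_ne_zero_aux {u : ℂ} (hu0 : 0 < u.re) (hu1 : u.re < 1) :
    Complex.sin ((Real.pi : ℂ) * u) ≠ 0 := by
  rw [Complex.sin_ne_zero_iff]
  intro k h
  have hπ : (Real.pi : ℂ) ≠ 0 := by exact_mod_cast Real.pi_ne_zero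
  have hu : u = (k : ℂ) := by
    have : (Real.pi : ℂ) * u = (Real.pi : ℂ) * (k : ℂ) := by rw [h]; ring
    exact mul_left_cancel₀ hπ this
  have : u.re = (k : ℤ) := by rw [hu]; simp
  rw [this] at hu0 hu1
  have h0 : (0:ℤ) < k := by exact_mod_cast hu0
  have h1 : (k:ℤ) < 1 := by exact_mod_cast hu1
  omega

lemma beta_subst {u : ℂ} (hu0 : 0 < u.re) (hu1 : u.re < 1) :
    (∫ t : ℝ, Complex.exp (u * t) / (1 + Complex.exp t))
      = Complex.betaIntegral u (1 - u) := by
  set f : ℝ → ℝ := fun x => Real.log x - Real.log (1 - x) with hf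
  set f' : ℝ → ℝ := fun x => x⁻¹ + (1 - x)⁻¹ with hf'
  have hderiv : ∀ x ∈ Ioo (0:ℝ) 1, HasDerivWithinAt f (f' x) (Ioo 0 1) x := by
    intro x hx
    have h1 : HasDerivAt Real.log x⁻¹ x := Real.hasDerivAt_log hx.1.ne'
    have h2 : HasDerivAt (fun x : ℝ => Real.log (1 - x)) (-(1 - x)⁻¹) x := by
      have := (Real.hasDerivAt_log (by linarith [hx.2] : (1:ℝ) - x ≠ 0)).comp x
        ((hasDerivAt_id x).const_sub 1)
      simp at this; exact this
    have := (h1.sub h2).hasDerivWithinAt (s := Ioo 0 1)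
    simp only [sub_neg_eq_add] at this; exact this
  have hinj : InjOn f (Ioo 0 1) := by
    intro a ha b hb h
    have ea : Real.exp (f a) = a / (1 - a) := by
      rw [hf]; rw [Real.exp_sub, Real.exp_log ha.1, Real.exp_log (by linarith [ha.2])]
    have eb : Real.exp (f b) = b / (1 - b) := by
      rw [hf]; rw [Real.exp_sub, Real.exp_log hb.1, Real.exp_log (by linarith [hb.2])]
    have : a / (1 - a) = b / (1 - b) := by rw [← ea, ← eb, h]
    have h1a : (1:ℝ) - a ≠ 0 := by linarith [ha.2]
    have h1b : (1:ℝ) - b ≠ 0 := by linarith [hb.2]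
    field_simp at this
    nlinarith [this]
  have himg : f '' (Ioo 0 1) = univ := by
    apply eq_univ_of_forall
    intro y
    refine ⟨Real.exp y / (1 + Real.exp y), ?_, ?_⟩
    · constructor
      · positivity
      · rw [div_lt_one (by positivity)]; linarith [Real.exp_pos y]
    · have hpos : (0:ℝ) < 1 + Real.exp y := by positivity
      have h1x : 1 - Real.exp y / (1 + Real.exp y) = (1 + Real.exp y)⁻¹ := by
        field_simp
        ring
      rw [hf]
      simp only [h1x, Real.log_inv, Real.log_div (Real.exp_pos y).ne' hpos.ne',
        Real.log_exp]
      ring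
  have key := integral_image_eq_integral_abs_deriv_smul measurableSet_Ioo hderiv hinj
    (fun t : ℝ => Complex.exp (u * t) / (1 + Complex.exp t))
  rw [himg] at key
  rw [← setIntegral_univ (μ := volume), key]
  rw [Complex.betaIntegral, intervalIntegral.integral_of_le zero_le_one,
    integral_Ioc_eq_integral_Ioo]
  refine setIntegral_congr_fun measurableSet_Ioo (fun x hx => ?_)
  obtain ⟨hx0, hx1⟩ := hx
  have h1x : (0:ℝ) < 1 - x := by linarith
  have habs : |f' x| = x⁻¹ + (1 - x)⁻¹ := by
    rw [hf']; rw [abs_of_pos (by positivity)]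
  have hexp : Complex.exp ((f x : ℝ) : ℂ) = ((x / (1 - x) : ℝ) : ℂ) := by
    rw [← Complex.ofReal_exp, hf, Real.exp_sub, Real.exp_log hx0, Real.exp_log h1x]
  have hcpow : Complex.exp (u * ((f x : ℝ) : ℂ)) = ((x/(1-x) : ℝ) : ℂ) ^ u := by
    have hr : (0:ℝ) < x / (1 - x) := by positivity
    rw [Complex.cpow_def_of_ne_zero (by exact_mod_cast hr.ne'), ← Complex.ofReal_log hr.le,
      hf, Real.log_div hx0.ne' h1x.ne', mul_comm]
  have hsplit : ((x/(1-x) : ℝ) : ℂ) ^ u = (x:ℂ) ^ u * ((1-x:ℝ) : ℂ) ^ (-u) := by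
    rw [div_eq_mul_inv, Complex.ofReal_mul, mul_cpow_ofReal_nonneg hx0.le (inv_nonneg.2 h1x.le),
      Complex.ofReal_inv, Complex.inv_cpow _ _ ?_, ← Complex.cpow_neg]
    rw [Complex.arg_ofReal_of_nonneg h1x.le]
    exact Real.pi_ne_zero.symm
  have hden : 1 + Complex.exp ((f x : ℝ) : ℂ) = ((1-x:ℝ):ℂ)⁻¹ := by
    rw [hexp]
    have h' : (1:ℂ) - (x:ℂ) ≠ 0 := by
      rw [show (1:ℂ) - (x:ℂ) = ((1-x:ℝ):ℂ) by push_cast; ring]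
      exact_mod_cast h1x.ne'
    push_cast
    field_simp
    ring
  rw [habs, hcpow, hsplit, hden]
  have hxne : (x:ℂ) ≠ 0 := by exact_mod_cast hx0.ne'
  have h1xne : ((1-x:ℝ):ℂ) ≠ 0 := by exact_mod_cast h1x.ne'
  have hpow : (x:ℂ) ^ (u-1) = (x:ℂ)^u / x := by
    rw [Complex.cpow_sub _ _ hxne, Complex.cpow_one]
  have h2 : (1 - (x:ℂ)) ^ (1 - u - 1) = ((1-x:ℝ):ℂ) ^ (-u) := by
    norm_num
  have h1xC : (1:ℂ) - (x:ℂ) ≠ 0 := by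
    rw [show (1:ℂ) - (x:ℂ) = ((1-x:ℝ):ℂ) by push_cast; ring]
    exact_mod_cast h1x.ne'
  rw [hpow, h2]
  rw [real_smul]
  push_cast
  field_simp
  ring

lemma exp_mul_integrableOn_Iic {c : ℝ} (hc : 0 < c) (a : ℝ) :
    IntegrableOn (fun t : ℝ => Real.exp (c * t)) (Iic a) := by
  rw [integrableOn_Iic_iff_integrableOn_Iio]
  have h := exp_neg_integrableOn_Ioi (-a) hc
  have h2 := (MeasurePreserving.integrableOn_comp_preimage
      (Measure.measurePreserving_neg (volume : Measure ℝ))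
      (Homeomorph.neg ℝ).measurableEmbedding).2 h
  have he : ((Neg.neg : ℝ → ℝ) ⁻¹' (Ioi (-a))) = Iio a := by ext x; simp
  rw [he] at h2
  simpa [Function.comp_def, mul_neg, neg_neg] using h2

lemma bound_integrable {u : ℂ} (hu0 : 0 < u.re) (hu1 : u.re < 1) {δ : ℝ} (hδ : 0 < δ) :
    Integrable (fun t : ℝ => Real.exp (u.re * t) * (Real.exp t / (δ + Real.exp t) ^ 2)) := by
  have hcont : Continuous (fun t : ℝ => Real.exp (u.re * t) * (Real.exp t / (δ + Real.exp t) ^ 2)) := by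
    apply Continuous.mul (by continuity)
    apply Continuous.div (by continuity) (by continuity)
    intro t
    positivity
  rw [← integrableOn_univ, ← Iic_union_Ioi (a := (0:ℝ))]
  apply IntegrableOn.union
  · apply Integrable.mono' (((exp_mul_integrableOn_Iic (by linarith : (0:ℝ) < u.re + 1) 0)).div_const (δ^2))
      hcont.aestronglyMeasurable.restrict
    refine (ae_restrict_iff' measurableSet_Iic).2 (Eventually.of_forall fun t ht => ?_)
    rw [Real.norm_of_nonneg (by positivity)]
    have h1 : Real.exp t / (δ + Real.exp t) ^ 2 ≤ Real.exp t / δ ^ 2 := by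
      gcongr
      nlinarith [Real.exp_pos t, Real.exp_pos t]
    calc Real.exp (u.re * t) * (Real.exp t / (δ + Real.exp t) ^ 2)
        ≤ Real.exp (u.re * t) * (Real.exp t / δ ^ 2) := by
          exact mul_le_mul_of_nonneg_left h1 (Real.exp_pos _).le
      _ = Real.exp ((u.re + 1) * t) / δ ^ 2 := by
          rw [add_mul, one_mul, Real.exp_add]; ring
  · apply Integrable.mono' (exp_neg_integrableOn_Ioi 0 (by linarith : (0:ℝ) < 1 - u.re))
      hcont.aestronglyMeasurable.restrict
    refine (ae_restrict_iff' measurableSet_Ioi).2 (Eventually.of_forall fun t ht => ?_)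
    rw [Real.norm_of_nonneg (by positivity)]
    have h1 : Real.exp t / (δ + Real.exp t) ^ 2 ≤ Real.exp (-t) := by
      rw [div_le_iff₀ (by positivity), Real.exp_neg, inv_mul_eq_div, le_div_iff₀ (Real.exp_pos t)]
      nlinarith [Real.exp_pos t]
    calc Real.exp (u.re * t) * (Real.exp t / (δ + Real.exp t) ^ 2)
        ≤ Real.exp (u.re * t) * Real.exp (-t) := by
          exact mul_le_mul_of_nonneg_left h1 (Real.exp_pos _).le
      _ = Real.exp (-(1 - u.re) * t) := by rw [← Real.exp_add]; ring_nf

lemma norm_exp_ut (u : ℂ) (t : ℝ) : ‖Complex.exp (u * t)‖ = Real.exp (u.re * t) := by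
  rw [Complex.norm_exp]
  congr 1
  simp [Complex.mul_re]

lemma denom_lb {x : ℂ} {δ : ℝ} (hx : δ ≤ x.re) (t : ℝ) :
    δ + Real.exp t ≤ ‖x + Complex.exp (t:ℂ)‖ := by
  have : (x + Complex.exp (t:ℂ)).re = x.re + Real.exp t := by
    simp [Complex.exp_ofReal_re]
  calc δ + Real.exp t ≤ (x + Complex.exp (t:ℂ)).re := by rw [this]; linarith
    _ ≤ ‖x + Complex.exp (t:ℂ)‖ := Complex.re_le_norm _

lemma denom_ne_zero {x : ℂ} (hx : 0 < x.re) (t : ℝ) : x + Complex.exp (t:ℂ) ≠ 0 := by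
  intro h
  have := congrArg Complex.re h
  simp [Complex.exp_ofReal_re] at this
  linarith [Real.exp_pos t]

lemma F_integrable {u : ℂ} (hu0 : 0 < u.re) (hu1 : u.re < 1) {S : ℂ} (hS : 0 < S.re) :
    Integrable (fun t : ℝ => S * Complex.exp (u * t) / (S + Complex.exp t)) := by
  have hcont : Continuous (fun t : ℝ => S * Complex.exp (u * t) / (S + Complex.exp t)) := by
    apply Continuous.div (by continuity) (by continuity)
    intro t
    exact denom_ne_zero hS t
  have hδ : 0 < S.re := hS
  -- majorant : ‖S‖ * (exp(a t) / (S.re + e^t))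
  have hmaj : Integrable (fun t : ℝ => ‖S‖ * (Real.exp (u.re * t) / (S.re + Real.exp t))) := by
    apply Integrable.const_mul
    have hcont2 : Continuous (fun t : ℝ => Real.exp (u.re * t) / (S.re + Real.exp t)) := by
      apply Continuous.div (by continuity) (by continuity)
      intro t; positivity
    rw [← integrableOn_univ, ← Iic_union_Ioi (a := (0:ℝ))]
    apply IntegrableOn.union
    · apply Integrable.mono' ((exp_mul_integrableOn_Iic hu0 0).div_const S.re)
        hcont2.aestronglyMeasurable.restrict
      refine (ae_restrict_iff' measurableSet_Iic).2 (Eventually.of_forall fun t ht => ?_)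
      rw [Real.norm_of_nonneg (by positivity)]
      gcongr
      linarith [Real.exp_pos t]
    · apply Integrable.mono' (exp_neg_integrableOn_Ioi 0 (by linarith : (0:ℝ) < 1 - u.re))
        hcont2.aestronglyMeasurable.restrict
      refine (ae_restrict_iff' measurableSet_Ioi).2 (Eventually.of_forall fun t ht => ?_)
      rw [Real.norm_of_nonneg (by positivity)]
      calc Real.exp (u.re * t) / (S.re + Real.exp t)
          ≤ Real.exp (u.re * t) / Real.exp t := by
            gcongr
            linarith
        _ = Real.exp (-(1 - u.re) * t) := by rw [← Real.exp_sub]; ring_nf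
  apply hmaj.mono' hcont.aestronglyMeasurable
  refine Eventually.of_forall fun t => ?_
  rw [norm_div, norm_mul, norm_exp_ut, mul_div_assoc]
  have hle := denom_lb (le_refl S.re) t
  gcongr

lemma F_differentiableAt {u : ℂ} (hu0 : 0 < u.re) (hu1 : u.re < 1) {S₀ : ℂ} (hS₀ : 0 < S₀.re) :
    DifferentiableAt ℂ (fun S : ℂ => ∫ t : ℝ, S * Complex.exp (u * t) / (S + Complex.exp t)) S₀ := by
  set δ : ℝ := S₀.re / 2 with hδdef
  have hδ : 0 < δ := by positivity
  have hball : ∀ x ∈ Metric.ball S₀ δ, δ ≤ x.re := by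
    intro x hx
    have h1 : ‖x - S₀‖ < δ := by rwa [Metric.mem_ball, dist_eq_norm] at hx
    have h2 : |(x - S₀).re| ≤ ‖x - S₀‖ := by
      exact Complex.abs_re_le_norm _
    rw [Complex.sub_re] at h2
    have := abs_le.1 (h2.trans h1.le)
    have := this.1
    simp only [hδdef] at *
    linarith
  have key := hasDerivAt_integral_of_dominated_loc_of_deriv_le (μ := volume)
    (F := fun (S : ℂ) (t : ℝ) => S * Complex.exp (u * t) / (S + Complex.exp t))
    (F' := fun (S : ℂ) (t : ℝ) => Complex.exp (u * t) * Complex.exp (t:ℂ) / (S + Complex.exp (t:ℂ)) ^ 2)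
    (x₀ := S₀)
    (bound := fun t : ℝ => Real.exp (u.re * t) * (Real.exp t / (δ + Real.exp t) ^ 2))
    (s := Metric.ball S₀ δ) (Metric.ball_mem_nhds S₀ hδ)
    ?_ (F_integrable hu0 hu1 hS₀) ?_ ?_ (bound_integrable hu0 hu1 hδ) ?_
  · exact key.2.differentiableAt
  · refine Eventually.of_forall fun x => ?_
    apply Measurable.aestronglyMeasurable
    apply Measurable.div
    · exact (continuous_const.mul (by continuity : Continuous fun t : ℝ => Complex.exp (u * t))).measurable
    · exact (by continuity : Continuous fun t : ℝ => x + Complex.exp (t:ℂ)).measurable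
  · apply Continuous.aestronglyMeasurable
    apply Continuous.div (by continuity) (by continuity)
    intro t
    exact pow_ne_zero 2 (denom_ne_zero hS₀ t)
  · refine Eventually.of_forall fun t => fun x hx => ?_
    have hxre := hball x hx
    have hle := denom_lb hxre t
    rw [norm_div, norm_mul, norm_exp_ut, norm_pow]
    have hne : ‖Complex.exp (t:ℂ)‖ = Real.exp t := by
      rw [Complex.norm_exp]; simp
    rw [hne, mul_div_assoc]
    have hsq : (δ + Real.exp t) ^ 2 ≤ ‖x + Complex.exp (t:ℂ)‖ ^ 2 :=
      pow_le_pow_left₀ (by positivity) hle 2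
    beta_reduce
    gcongr
  · refine Eventually.of_forall fun t => fun x hx => ?_
    have hd : x + Complex.exp (t:ℂ) ≠ 0 := denom_ne_zero (lt_of_lt_of_le hδ (hball x hx)) t
    have h1 : HasDerivAt (fun y : ℂ => y * Complex.exp (u * t)) (Complex.exp (u * t)) x := by
      simpa using (hasDerivAt_id x).mul_const (Complex.exp (u * (t:ℂ)))
    have h2 : HasDerivAt (fun y : ℂ => y + Complex.exp (t:ℂ)) 1 x := (hasDerivAt_id x).add_const _
    have h3 := h1.div h2 hd
    have heq : Complex.exp (u * t) * Complex.exp (t:ℂ) / (x + Complex.exp (t:ℂ)) ^ 2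
        = (Complex.exp (u * t) * (x + Complex.exp (t:ℂ)) - x * Complex.exp (u * t) * 1)
            / (x + Complex.exp (t:ℂ)) ^ 2 := by
      congr 1; ring
    beta_reduce
    rw [heq]
    exact h3

lemma beta_eq {u : ℂ} (hu0 : 0 < u.re) (hu1 : u.re < 1) :
    Complex.betaIntegral u (1 - u) = (Real.pi : ℂ) / Complex.sin ((Real.pi : ℂ) * u) := by
  have h1u : 0 < (1 - u).re := by simp [Complex.sub_re]; linarith
  have h := Complex.Gamma_mul_Gamma_eq_betaIntegral hu0 h1u
  rw [show u + (1 - u) = 1 by ring, Complex.Gamma_one, one_mul] at h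
  rw [← h, Complex.Gamma_mul_Gamma_one_sub]

lemma real_case {u : ℂ} (hu0 : 0 < u.re) (hu1 : u.re < 1) {s : ℝ} (hs : 0 < s) :
    (∫ t : ℝ, (s : ℂ) * Complex.exp (u * t) / ((s : ℂ) + Complex.exp t))
      = ((s : ℂ)) ^ u * ∫ t : ℝ, Complex.exp (u * t) / (1 + Complex.exp t) := by
  have hsne : ((s : ℂ)) ≠ 0 := by exact_mod_cast hs.ne'
  have htrans := MeasureTheory.integral_add_right_eq_self (μ := volume)
    (fun t : ℝ => (s : ℂ) * Complex.exp (u * t) / ((s : ℂ) + Complex.exp t)) (Real.log s)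
  rw [← htrans, ← MeasureTheory.integral_const_mul]
  apply integral_congr_ae
  refine Eventually.of_forall fun t => ?_
  have hlog : Complex.exp (((Real.log s : ℝ) : ℂ)) = (s : ℂ) := by
    rw [← Complex.ofReal_exp, Real.exp_log hs]
  have hcpow : Complex.exp (u * ((Real.log s : ℝ) : ℂ)) = (s : ℂ) ^ u := by
    rw [Complex.cpow_def_of_ne_zero hsne, ← Complex.ofReal_log hs.le, mul_comm]
  have he1 : Complex.exp (u * ((t + Real.log s : ℝ) : ℂ))
      = Complex.exp (u * t) * (s : ℂ) ^ u := by
    push_cast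
    rw [mul_add, Complex.exp_add, hcpow]
  have he2 : Complex.exp (((t + Real.log s : ℝ) : ℂ)) = Complex.exp (t : ℂ) * (s : ℂ) := by
    push_cast
    rw [Complex.exp_add, hlog]
  beta_reduce
  rw [he1, he2]
  rw [show (s : ℂ) + Complex.exp (t:ℂ) * (s:ℂ) = (s:ℂ) * (1 + Complex.exp (t:ℂ)) by ring,
    show (s:ℂ) * (Complex.exp (u * t) * (s:ℂ) ^ u) = (s:ℂ) * ((s:ℂ)^u * Complex.exp (u * t)) by ring,
    mul_div_mul_left _ _ hsne, mul_div_assoc]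

/-- For complex `S` with positive real part and complex `u` with `0 < Re(u) < 1`,
`π S^u / sin(πu) = ∫_ℝ S e^{ut} / (S + e^t) dt` (principal branch power). -/
theorem pi_cpow_div_sin_eq_integral (S u : ℂ) (hS : 0 < S.re)
    (hu0 : 0 < u.re) (hu1 : u.re < 1) :
    (Real.pi : ℂ) * S ^ u / Complex.sin ((Real.pi : ℂ) * u)
      = ∫ t : ℝ, S * Complex.exp (u * t) / (S + Complex.exp t) := by
  set U : Set ℂ := {z : ℂ | 0 < z.re} with hU
  have hUo : IsOpen U := isOpen_lt continuous_const Complex.continuous_re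
  set G : ℂ → ℂ := fun S => (Real.pi : ℂ) * S ^ u / Complex.sin ((Real.pi : ℂ) * u) with hG
  set F : ℂ → ℂ := fun S => ∫ t : ℝ, S * Complex.exp (u * t) / (S + Complex.exp t) with hF
  have hFa : AnalyticOnNhd ℂ F U := by
    apply DifferentiableOn.analyticOnNhd _ hUo
    exact fun z hz => (F_differentiableAt hu0 hu1 hz).differentiableWithinAt
  have hGa : AnalyticOnNhd ℂ G U := by
    apply DifferentiableOn.analyticOnNhd _ hUo
    intro z hz
    apply DifferentiableAt.differentiableWithinAt
    apply DifferentiableAt.div_const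
    apply DifferentiableAt.const_mul
    exact differentiableAt_id.cpow (differentiableAt_const u) (Or.inl hz)
  have hpre : IsPreconnected U := (convex_halfSpace_re_gt 0).isPreconnected
  have h1U : (1:ℂ) ∈ U := by simp [hU]
  have base : ∀ s : ℝ, 0 < s → G ((s:ℝ) : ℂ) = F ((s:ℝ) : ℂ) := by
    intro s hs
    rw [hG, hF]
    beta_reduce
    rw [real_case hu0 hu1 hs, beta_subst hu0 hu1, beta_eq hu0 hu1]
    ring
  have hseq : Tendsto (fun n : ℕ => ((1 + (1:ℝ)/((n:ℝ)+1) : ℝ) : ℂ)) atTop (𝓝[≠] 1) := by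
    apply tendsto_nhdsWithin_of_tendsto_nhds_of_eventually_within
    · have h1 : Tendsto (fun n : ℕ => (1 + (1:ℝ)/((n:ℝ)+1) : ℝ)) atTop (𝓝 1) := by
        have := tendsto_one_div_add_atTop_nhds_zero_nat (𝕜 := ℝ)
        have h2 := this.const_add (1 : ℝ)
        simpa using h2
      have := (Complex.continuous_ofReal.tendsto 1).comp h1
      simpa [Function.comp_def] using this
    · refine Eventually.of_forall fun n => ?_
      simp only [mem_compl_singleton_iff]
      intro hcontra
      have : (1 + (1:ℝ)/((n:ℝ)+1) : ℝ) = 1 := by exact_mod_cast hcontra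
      have hpos : (0:ℝ) < (1:ℝ)/((n:ℝ)+1) := by positivity
      linarith
  have hfreq : ∃ᶠ z in 𝓝[≠] (1:ℂ), G z = F z :=
    hseq.frequently (Frequently.of_forall fun n => base _ (by positivity))
  exact hGa.eqOn_of_preconnected_of_frequently_eq hFa hpre h1U hfreq hS
end

section
/- Let (f_n) be a sequence of functions ℝ → [0,1] such that each f_n is strictly decreasing with limit 1 at -∞ and 0 at +∞, and such that for every δ > 0, f_n converges uniformly to the indicator 1_{x ≤ 0} on ℝ \ [-δ, δ]. Let (X_n) be random variables with E[f_n(X_n - r)] → p(r) for every r ∈ ℝ, where p is a continuous probability distribution function. Then X_n converges weakly in distribution to a random variable X with P(X ≤ r) = p(r). -/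
open MeasureTheory Filter

/-- Lemma 4.1.38 of Borodin–Corwin: if `f_n : ℝ → [0,1]` are strictly decreasing with
limits `1` at `-∞` and `0` at `+∞`, converging uniformly to `1_{x ≤ 0}` away from any
neighborhood of `0`, and `E[f_n(X_n - r)] → p(r)` for a continuous probability
distribution function `p`, then `X_n` converges weakly in distribution to a random
variable with cumulative distribution function `p` (since `p` is continuous, the CDFs
converge at every point). -/
theorem weak_convergence_from_expectations
    {Ω : Type*} [MeasurableSpace Ω] (μ : Measure Ω) [IsProbabilityMeasure μ]
    (f : ℕ → ℝ → ℝ)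
    (hf01 : ∀ n x, f n x ∈ Set.Icc (0 : ℝ) 1)
    (hanti : ∀ n, StrictAnti (f n))
    (hbot : ∀ n, Tendsto (f n) atBot (nhds 1))
    (htop : ∀ n, Tendsto (f n) atTop (nhds 0))
    (hunif : ∀ δ > (0 : ℝ),
      TendstoUniformlyOn f (fun x => if x ≤ 0 then 1 else 0) atTop {x : ℝ | δ ≤ |x|})
    (X : ℕ → Ω → ℝ) (hX : ∀ n, Measurable (X n))
    (p : ℝ → ℝ) (hp : Continuous p) (hpmono : Monotone p)
    (hp0 : Tendsto p atBot (nhds 0)) (hp1 : Tendsto p atTop (nhds 1))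
    (hE : ∀ r : ℝ, Tendsto (fun n => ∫ ω, f n (X n ω - r) ∂μ) atTop (nhds (p r))) :
    ∀ r : ℝ, Tendsto (fun n => (μ {ω | X n ω ≤ r}).toReal) atTop (nhds (p r)) := by
  intro r
  rw [Metric.tendsto_atTop]
  intro ε hε
  obtain ⟨δ, hδ, hδp⟩ := Metric.continuousAt_iff.mp (hp.continuousAt (x := r)) (ε/4) (by linarith)
  set δ' := δ/2 with hδ'def
  have hδ' : 0 < δ' := by positivity
  have hp_plus : p (r + δ') < p r + ε/4 := by
    have h1 := hδp (x := r + δ') (by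
      rw [Real.dist_eq, show r + δ' - r = δ' by ring, abs_of_pos hδ']
      simp only [hδ'def]; linarith)
    rw [Real.dist_eq] at h1
    linarith [(abs_lt.mp h1).2]
  have hp_minus : p r - ε/4 < p (r - δ') := by
    have h1 := hδp (x := r - δ') (by
      rw [Real.dist_eq, show r - δ' - r = -δ' by ring, abs_neg, abs_of_pos hδ']
      simp only [hδ'def]; linarith)
    rw [Real.dist_eq] at h1
    linarith [(abs_lt.mp h1).1]
  have hu := Metric.tendstoUniformlyOn_iff.mp (hunif δ' hδ') (ε/4) (by linarith)
  rw [eventually_atTop] at hu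
  obtain ⟨N1, hN1⟩ := hu
  obtain ⟨N2, hN2⟩ := Metric.tendsto_atTop.mp (hE (r + δ')) (ε/4) (by linarith)
  obtain ⟨N3, hN3⟩ := Metric.tendsto_atTop.mp (hE (r - δ')) (ε/4) (by linarith)
  refine ⟨max (max N1 N2) N3, fun n hn => ?_⟩
  have hn1 : N1 ≤ n := le_trans (le_trans (le_max_left _ _) (le_max_left _ _)) hn
  have hn2 : N2 ≤ n := le_trans (le_trans (le_max_right _ _) (le_max_left _ _)) hn
  have hn3 : N3 ≤ n := le_trans (le_max_right _ _) hn
  set s : Set Ω := {ω | X n ω ≤ r} with hsdef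
  have hs : MeasurableSet s := (hX n) measurableSet_Iic
  -- integrability
  have hint : ∀ c : ℝ, Integrable (fun ω => f n (X n ω - c)) μ := by
    intro c
    have hm : Measurable (fun ω => f n (X n ω - c)) :=
      ((hanti n).antitone.measurable).comp ((hX n).sub measurable_const)
    refine ⟨hm.aestronglyMeasurable, ?_⟩
    apply MeasureTheory.HasFiniteIntegral.of_bounded (C := 1)
    filter_upwards with ω
    rw [Real.norm_eq_abs, abs_le]
    exact ⟨by linarith [(hf01 n (X n ω - c)).1], (hf01 n (X n ω - c)).2⟩
  have hindint : Integrable (s.indicator (fun _ => (1:ℝ))) μ :=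
    (integrable_const (1:ℝ)).indicator hs
  have hPn : (μ s).toReal = ∫ ω, s.indicator (fun _ => (1:ℝ)) ω ∂μ := by
    rw [MeasureTheory.integral_indicator hs]
    simp
    rfl
  -- pointwise bounds
  have key1 : ∀ ω, s.indicator (fun _ => (1:ℝ)) ω ≤ f n (X n ω - (r + δ')) + ε/4 := by
    intro ω
    by_cases h : X n ω ≤ r
    · rw [Set.indicator_of_mem (show ω ∈ s from h)]
      have hx : X n ω - (r + δ') ≤ -δ' := by linarith
      have hmem : X n ω - (r + δ') ∈ {x : ℝ | δ' ≤ |x|} := by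
        simp only [Set.mem_setOf_eq]
        rw [abs_of_nonpos (by linarith)]
        linarith
      have hd := hN1 n hn1 _ hmem
      rw [if_pos (by linarith : X n ω - (r + δ') ≤ 0), Real.dist_eq] at hd
      linarith [(abs_lt.mp hd).2]
    · rw [Set.indicator_of_notMem (show ω ∉ s from h)]
      linarith [(hf01 n (X n ω - (r + δ'))).1]
  have key2 : ∀ ω, f n (X n ω - (r - δ')) ≤ s.indicator (fun _ => (1:ℝ)) ω + ε/4 := by
    intro ω
    by_cases h : X n ω ≤ r
    · rw [Set.indicator_of_mem (show ω ∈ s from h)]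
      linarith [(hf01 n (X n ω - (r - δ'))).2]
    · rw [Set.indicator_of_notMem (show ω ∉ s from h)]
      push_neg at h
      have hx : δ' ≤ X n ω - (r - δ') := by linarith
      have hmem : X n ω - (r - δ') ∈ {x : ℝ | δ' ≤ |x|} := by
        simp only [Set.mem_setOf_eq]
        rw [abs_of_pos (by linarith)]
        exact hx
      have hd := hN1 n hn1 _ hmem
      rw [if_neg (by push_neg; linarith : ¬ X n ω - (r - δ') ≤ 0), Real.dist_eq] at hd
      linarith [(abs_lt.mp hd).1]
  -- integral bounds
  have hub : (μ s).toReal ≤ (∫ ω, f n (X n ω - (r + δ')) ∂μ) + ε/4 := by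
    rw [hPn]
    calc ∫ ω, s.indicator (fun _ => (1:ℝ)) ω ∂μ
        ≤ ∫ ω, (f n (X n ω - (r + δ')) + ε/4) ∂μ :=
          integral_mono hindint ((hint _).add (integrable_const _)) key1
      _ = (∫ ω, f n (X n ω - (r + δ')) ∂μ) + ε/4 := by
          rw [integral_add (hint _) (integrable_const _)]
          simp
  have hlb : (∫ ω, f n (X n ω - (r - δ')) ∂μ) ≤ (μ s).toReal + ε/4 := by
    rw [hPn]
    calc ∫ ω, f n (X n ω - (r - δ')) ∂μ
        ≤ ∫ ω, (s.indicator (fun _ => (1:ℝ)) ω + ε/4) ∂μ :=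
          integral_mono (hint _) (hindint.add (integrable_const _)) key2
      _ = (∫ ω, s.indicator (fun _ => (1:ℝ)) ω ∂μ) + ε/4 := by
          rw [integral_add hindint (integrable_const _)]
          simp
  have hd2 := hN2 n hn2
  have hd3 := hN3 n hn3
  rw [Real.dist_eq] at hd2 hd3 ⊢
  have h2 := abs_lt.mp hd2
  have h3 := abs_lt.mp hd3
  rw [abs_lt]
  constructor <;> [skip; skip] <;> simp only [hsdef] at * <;> push_cast at * <;> nlinarith [h2.1, h2.2, h3.1, h3.2, hub, hlb, hp_plus, hp_minus]
end

section
/- Fix θ > 0 and set g̃(X,Y) = g(θ+θX, θY)/θ where g(x,y) = Re(ln Γ(x+iy)) + f_θ x - (κ_θ/2)(x²-y²). Then for every X ≥ 0, ∂g̃/∂Y (X,Y) = Σ_{n=0}^∞ ( θY/(θ+n)² - θY/((θ+θX+n)² + θ²Y²) ), which is zero at Y=0 and strictly positive for Y > 0; in particular Y ↦ g̃(X,Y) is strictly increasing on (0,∞). Moreover ∂g̃/∂Y (X,Y) ≥ ∂g̃/∂Y (0,Y) = Σ_{n=0}^∞ θ³Y³ / ( (θ+n)² ((θ+n)² + θ²Y²)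 ). -/
/-- The rescaled function `g̃(X,Y) = g(θ+θX, θY)/θ`. -/
noncomputable def gTilde (θ X Y : ℝ) : ℝ := gFun θ (θ + θ * X) (θ * Y) / θ

/-- The series `Σ_{n=0}^∞ ( θY/(θ+n)² - θY/((θ+θX+n)² + θ²Y²) )` for `∂g̃/∂Y`. -/
noncomputable def gTildeDerivSeries (θ X Y : ℝ) : ℝ :=
  ∑' n : ℕ, (θ * Y / (θ + n) ^ 2 - θ * Y / ((θ + θ * X + n) ^ 2 + θ ^ 2 * Y ^ 2))

open Real Filter Topology Finset


lemma log_one_add_le {t : ℝ} (ht : 0 ≤ t) : Real.log (1+t) ≤ t := by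
  have := Real.log_le_sub_one_of_pos (show (0:ℝ) < 1+t by linarith)
  linarith

lemma le_log_one_add {t : ℝ} (ht : 0 ≤ t) : t/(1+t) ≤ Real.log (1+t) := by
  have h1 : (0:ℝ) < 1+t := by linarith
  have := Real.log_le_sub_one_of_pos (inv_pos.2 h1)
  rw [Real.log_inv] at this
  have h2 : (1+t)⁻¹ - 1 = -(t/(1+t)) := by field_simp; ring
  linarith [this.trans_eq h2]

noncomputable def uFun (x : ℝ) (n : ℕ) : ℝ :=
  x * Real.log (1 + 1/((n:ℝ)+1)) - Real.log (1 + x/((n:ℝ)+1))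

noncomputable def vFun (x : ℝ) (n : ℕ) : ℝ :=
  Real.log (1 + 1/((n:ℝ)+1)) - 1/(x+((n:ℝ)+1))

lemma uFun_abs_le {x : ℝ} (hx : 0 ≤ x) (n : ℕ) :
    |uFun x n| ≤ (x^2 + x) * (1/((n:ℝ)+1)^2) := by
  set k : ℝ := (n:ℝ)+1 with hk
  have hk0 : (0:ℝ) < k := by positivity
  have ha : (0:ℝ) ≤ 1/k := by positivity
  have hs : (0:ℝ) ≤ x/k := by positivity
  have h1 := log_one_add_le ha
  have h2 := le_log_one_add ha
  have h3 := log_one_add_le hs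
  have h4 := le_log_one_add hs
  have e1 : (1:ℝ)/k/(1+1/k) = 1/(k+1) := by
    rw [div_div, mul_add, mul_one, mul_one_div, div_self (ne_of_gt hk0)]
  have e2 : x/k/(1+x/k) = x/(k+x) := by
    rw [div_div, mul_add, mul_one, mul_div_cancel₀ _ (ne_of_gt hk0)]
  rw [e1] at h2; rw [e2] at h4
  have hb1 : x * (1/(k+1)) ≤ x * Real.log (1+1/k) := mul_le_mul_of_nonneg_left h2 hx
  have hb2 : x * Real.log (1+1/k) ≤ x * (1/k) := mul_le_mul_of_nonneg_left h1 hx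
  have key1 : x * (1/k) - x * (1/(k+1)) ≤ x * (1/k^2) := by
    have e : x * (1/k) - x * (1/(k+1)) = x/(k*(k+1)) := by
      field_simp
      ring
    rw [e, mul_one_div, div_le_div_iff₀ (by positivity) (by positivity)]
    nlinarith
  have key2 : x * (1/k) - x/(k+x) ≤ x^2 * (1/k^2) := by
    have e : x * (1/k) - x/(k+x) = (x*x)/(k*(k+x)) := by
      field_simp
      ring
    rw [e, mul_one_div, div_le_div_iff₀ (by positivity) (by positivity)]
    nlinarith [mul_nonneg (mul_nonneg (mul_nonneg hx hx) hx) hk0.le]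
  have hq1 : (0:ℝ) ≤ x^2 * (1/k^2) := by positivity
  have hq2 : (0:ℝ) ≤ x * (1/k^2) := by positivity
  have hxk : x/k = x * (1/k) := by rw [mul_one_div]
  rw [abs_le]
  unfold uFun; rw [← hk]
  constructor
  · have h3' : Real.log (1 + x/k) ≤ x * (1/k) := by rw [← hxk]; exact h3
    nlinarith [hb1, h3', key1]
  · have h4' : x/(k+x) ≤ Real.log (1 + x/k) := h4
    nlinarith [hb2, h4', key2]

lemma base_summable : Summable (fun n : ℕ => 1 / ((n:ℝ)+1)^2) := by
  have := (summable_nat_add_iff (f := fun n : ℕ => 1 / (n:ℝ)^2) 1).2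
    (summable_one_div_nat_pow.2 one_lt_two)
  simpa [Nat.cast_add] using this

lemma summable_uFun {x : ℝ} (hx : 0 ≤ x) : Summable (uFun x) :=
  Summable.of_abs (Summable.of_nonneg_of_le (fun n => abs_nonneg _)
    (fun n => uFun_abs_le hx n) (base_summable.mul_left _))

lemma summable_shift_sq {x : ℝ} (hx : 0 < x) : Summable (fun n : ℕ => 1 / (x + n)^2) := by
  set m := min x 1 with hm'
  have hm : 0 < m := lt_min hx one_pos
  refine Summable.of_nonneg_of_le (f := fun n : ℕ => (1 / m^2) * (1 / ((n:ℝ)+1)^2))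
    (fun n => by positivity) (fun n => ?_) (base_summable.mul_left _)
  have h1 : m * ((n:ℝ)+1) ≤ x + n := by
    have h2 : m ≤ x := min_le_left _ _
    have h3 : m ≤ 1 := min_le_right _ _
    have hn : (0:ℝ) ≤ n := n.cast_nonneg
    nlinarith
  have hp : (0:ℝ) < m * ((n:ℝ)+1) := by positivity
  have h4 : (m * ((n:ℝ)+1))^2 ≤ (x+n)^2 := by nlinarith
  have h5 := one_div_le_one_div_of_le (by positivity) h4
  calc 1 / (x+n)^2 ≤ 1 / (m * ((n:ℝ)+1))^2 := h5
    _ = (1 / m^2) * (1 / ((n:ℝ)+1)^2) := by rw [mul_pow, one_div, mul_inv, one_div, one_div]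

-- derivative of uFun n at x > 0 is vFun n x
lemma hasDerivAt_uFun (n : ℕ) {x : ℝ} (hx : 0 < x) :
    HasDerivAt (fun y => uFun y n) (vFun x n) x := by
  set k : ℝ := (n:ℝ)+1 with hk
  have hk0 : (0:ℝ) < k := by positivity
  have h1 : HasDerivAt (fun y : ℝ => y * Real.log (1 + 1/k)) (Real.log (1 + 1/k)) x := by
    simpa using (hasDerivAt_id x).mul_const (Real.log (1 + 1/k))
  have hinner : HasDerivAt (fun y : ℝ => 1 + y/k) (1/k) x := by
    simpa using ((hasDerivAt_id x).div_const k).const_add 1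
  have hpos : (0:ℝ) < 1 + x/k := by positivity
  have h2 : HasDerivAt (fun y : ℝ => Real.log (1 + y/k)) ((1/k)/(1 + x/k)) x :=
    hinner.log (ne_of_gt hpos)
  have : HasDerivAt (fun y => uFun y n) (Real.log (1 + 1/k) - (1/k)/(1+x/k)) x := by
    exact h1.sub h2
  convert this using 1
  unfold vFun; rw [← hk]
  congr 1
  rw [div_div, mul_add, mul_one, mul_div_cancel₀ _ (ne_of_gt hk0), add_comm]

lemma hasDerivAt_vFun (n : ℕ) {x : ℝ} (hx : 0 < x) :
    HasDerivAt (fun y => vFun y n) (1/(x+((n:ℝ)+1))^2) x := by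
  set k : ℝ := (n:ℝ)+1 with hk
  have hk0 : (0:ℝ) < k := by positivity
  have hxk : x + k ≠ 0 := by positivity
  have hinner : HasDerivAt (fun y : ℝ => y + k) 1 x := (hasDerivAt_id x).add_const k
  have h2 : HasDerivAt (fun y : ℝ => (y+k)⁻¹) (-1 / (x+k)^2) x := by
    simpa [Pi.inv_def] using hinner.inv hxk
  have h3 : HasDerivAt (fun y => vFun y n) (0 - -1/(x+k)^2) x := by
    unfold vFun; rw [← hk]
    simpa [one_div, neg_div, Pi.sub_def] using HasDerivAt.sub (hasDerivAt_const x (Real.log (1+1/k))) h2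
  convert h3 using 1
  ring

noncomputable def QFun (x : ℝ) (N : ℕ) : ℝ :=
  ((N:ℝ)+1)^x * (Nat.factorial N : ℝ) / ∏ j ∈ Finset.range (N+1), (x + j)

lemma QFun_pos {x : ℝ} (hx : 0 < x) (N : ℕ) : 0 < QFun x N := by
  have h1 : (0:ℝ) < ((N:ℝ)+1)^x := rpow_pos_of_pos (by positivity) x
  have h2 : (0:ℝ) < (Nat.factorial N : ℝ) := by exact_mod_cast Nat.factorial_pos N
  have h3 : (0:ℝ) < ∏ j ∈ Finset.range (N+1), (x + j) :=
    Finset.prod_pos (fun j _ => by positivity)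
  exact div_pos (mul_pos h1 h2) h3

lemma log_QFun {x : ℝ} (hx : 0 < x) (N : ℕ) :
    Real.log (QFun x N) = -Real.log x + ∑ n ∈ Finset.range N, uFun x n := by
  induction N with
  | zero =>
    have h0 : QFun x 0 = 1/x := by
      unfold QFun
      norm_num [Finset.prod_range_one, Real.one_rpow]
    rw [h0, Real.log_div one_ne_zero (ne_of_gt hx)]
    simp
  | succ N ih =>
    have hstep : QFun x (N+1)
        = QFun x N * ((((N:ℝ)+2)/((N:ℝ)+1))^x * (((N:ℝ)+1) / (x + ((N:ℝ)+1)))) := by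
      unfold QFun
      have hprod : ∏ j ∈ Finset.range (N+2), (x + j)
          = (∏ j ∈ Finset.range (N+1), (x + j)) * (x + ((N:ℝ)+1)) := by
        rw [Finset.prod_range_succ]; push_cast; ring_nf
      have hfact : (Nat.factorial (N+1) : ℝ) = ((N:ℝ)+1) * (Nat.factorial N : ℝ) := by
        rw [Nat.factorial_succ]; push_cast; ring
      have hrpow : (((N:ℝ)+2)/((N:ℝ)+1))^x = ((N:ℝ)+2)^x / ((N:ℝ)+1)^x :=
        Real.div_rpow (by positivity) (by positivity) x
      have hN2 : ((N+1:ℕ):ℝ)+1 = (N:ℝ)+2 := by push_cast; ring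
      rw [hN2, hprod, hfact, hrpow]
      have c1 : ((N:ℝ)+1)^x ≠ 0 := ne_of_gt (rpow_pos_of_pos (by positivity) x)
      have c2 : (∏ j ∈ Finset.range (N+1), (x + j)) ≠ 0 :=
        ne_of_gt (Finset.prod_pos (fun j _ => by positivity))
      have c3 : x + ((N:ℝ)+1) ≠ 0 := by positivity
      field_simp
    rw [hstep, Real.log_mul (ne_of_gt (QFun_pos hx N)) (by positivity), ih,
      Finset.sum_range_succ]
    have e1 : Real.log ((((N:ℝ)+2)/((N:ℝ)+1))^x * (((N:ℝ)+1) / (x + ((N:ℝ)+1)))) = uFun x N := by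
      rw [Real.log_mul (by positivity) (by positivity),
        Real.log_rpow (by positivity),
        Real.log_div (by positivity) (by positivity),
        Real.log_div (by positivity) (by positivity)]
      unfold uFun
      have e2 : 1 + 1/((N:ℝ)+1) = ((N:ℝ)+2)/((N:ℝ)+1) := by
        field_simp
        ring
      have e3 : 1 + x/((N:ℝ)+1) = (x + ((N:ℝ)+1))/((N:ℝ)+1) := by field_simp; ring
      rw [e2, e3, Real.log_div (by positivity) (by positivity),
        Real.log_div (by positivity) (by positivity)]
      ring
    rw [e1]; ring


lemma tendsto_QFun {x : ℝ} (hx : 0 < x) :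
    Tendsto (QFun x) atTop (𝓝 (Real.Gamma x)) := by
  have hc : Tendsto (fun N : ℕ => (((N:ℝ)+1)/(N:ℝ))^x) atTop (𝓝 1) := by
    have h1 : Tendsto (fun N : ℕ => ((N:ℝ)+1)/(N:ℝ)) atTop (𝓝 1) := by
      have := tendsto_one_div_atTop_nhds_zero_nat (𝕜 := ℝ)
      have h2 : Tendsto (fun N : ℕ => 1 + 1/(N:ℝ)) atTop (𝓝 (1+0)) :=
        tendsto_const_nhds.add this
      refine h2.congr' ?_ |>.mono_right (by norm_num)
      filter_upwards [eventually_ne_atTop 0] with N hN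
      field_simp
    have := h1.rpow_const (p := x) (Or.inl one_ne_zero)
    simpa [Real.one_rpow] using this
  have hmain : Tendsto (fun N => Real.GammaSeq x N * (((N:ℝ)+1)/(N:ℝ))^x) atTop
      (𝓝 (Real.Gamma x)) := by
    have := (Real.GammaSeq_tendsto_Gamma x).mul hc
    simpa using this
  refine hmain.congr' ?_
  filter_upwards [eventually_ge_atTop 1] with N hN
  have hN0 : (0:ℝ) < (N:ℝ) := by exact_mod_cast hN
  unfold QFun Real.GammaSeq
  rw [Real.div_rpow (by positivity) (le_of_lt hN0) x]
  have hNx : (0:ℝ) < (N:ℝ)^x := rpow_pos_of_pos hN0 x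
  field_simp

lemma logGamma_eq_tsum {x : ℝ} (hx : 0 < x) :
    Real.log (Real.Gamma x) = -Real.log x + ∑' n, uFun x n := by
  have hsum := summable_uFun hx.le
  have A : Tendsto (fun N => -Real.log x + ∑ n ∈ Finset.range N, uFun x n) atTop
      (𝓝 (-Real.log x + ∑' n, uFun x n)) :=
    tendsto_const_nhds.add hsum.hasSum.tendsto_sum_nat
  have B : Tendsto (fun N => Real.log (QFun x N)) atTop (𝓝 (Real.log (Real.Gamma x))) :=
    (tendsto_QFun hx).log (ne_of_gt (Real.Gamma_pos_of_pos hx))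
  have : Tendsto (fun N => -Real.log x + ∑ n ∈ Finset.range N, uFun x n) atTop
      (𝓝 (Real.log (Real.Gamma x))) := by
    refine B.congr (fun N => log_QFun hx N)
  exact tendsto_nhds_unique this A


lemma vFun_abs_le {x B : ℝ} (hx : 0 < x) (hxB : x ≤ B) (n : ℕ) :
    |vFun x n| ≤ (B+1) * (1/((n:ℝ)+1)^2) := by
  set k : ℝ := (n:ℝ)+1 with hk
  have hk0 : (0:ℝ) < k := by positivity
  have hB : 0 < B := lt_of_lt_of_le hx hxB
  have h1 := log_one_add_le (show (0:ℝ) ≤ 1/k by positivity)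
  have h2 := le_log_one_add (show (0:ℝ) ≤ 1/k by positivity)
  have e1 : (1:ℝ)/k/(1+1/k) = 1/(k+1) := by
    rw [div_div, mul_add, mul_one, mul_one_div, div_self (ne_of_gt hk0)]
  rw [e1] at h2
  have hlow : 1/(B+k) ≤ 1/(x+k) := by
    apply one_div_le_one_div_of_le (by positivity) (by linarith)
  have hup : 1/(x+k) ≤ 1/k := by
    apply one_div_le_one_div_of_le hk0 (by linarith)
  have key1 : 1/k - 1/(B+k) ≤ B * (1/k^2) := by
    have e : 1/k - 1/(B+k) = B/(k*(B+k)) := by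
      field_simp
      ring
    rw [e, mul_one_div, div_le_div_iff₀ (by positivity) (by positivity)]
    nlinarith [mul_pos (mul_pos hB hB) hk0]
  have key2 : 1/k - 1/(k+1) ≤ 1 * (1/k^2) := by
    have e : 1/k - 1/(k+1) = 1/(k*(k+1)) := by
      field_simp
      ring
    rw [e, one_mul, div_le_div_iff₀ (by positivity) (by positivity)]
    nlinarith
  have hq : (0:ℝ) ≤ 1/k^2 := by positivity
  rw [abs_le]
  unfold vFun; rw [← hk]
  constructor
  · nlinarith [h2, hup, key2]
  · nlinarith [h1, hlow, key1]

noncomputable def Dfun (x : ℝ) : ℝ := -x⁻¹ + ∑' n, vFun x n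

lemma summable_vFun {x : ℝ} (hx : 0 < x) : Summable (vFun x) :=
  Summable.of_abs (Summable.of_nonneg_of_le (fun n => abs_nonneg _)
    (fun n => vFun_abs_le hx le_rfl n) (base_summable.mul_left _))

lemma hasDerivAt_logGamma {θ : ℝ} (hθ : 0 < θ) :
    ∀ x ∈ Set.Ioo (0:ℝ) (θ+1), HasDerivAt (fun t => Real.log (Real.Gamma t)) (Dfun x) x := by
  intro x hx
  have htsum : HasDerivAt (fun z => ∑' n, uFun z n) (∑' n, vFun x n) x := by
    refine hasDerivAt_tsum_of_isPreconnected
      (u := fun n : ℕ => (θ+2) * (1/((n:ℝ)+1)^2))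
      (base_summable.mul_left _) isOpen_Ioo (convex_Ioo _ _).isPreconnected
      (fun n y hy => hasDerivAt_uFun n hy.1) ?_ (y₀ := θ) ⟨hθ, by linarith⟩
      (summable_uFun hθ.le) hx
    intro n y hy
    rw [Real.norm_eq_abs]
    exact vFun_abs_le hy.1 (by linarith [hy.2] : y ≤ θ+1) n |>.trans (by nlinarith [sq_nonneg ((n:ℝ)+1), (show (0:ℝ) < 1/((n:ℝ)+1)^2 by positivity)])
  have hL : HasDerivAt (fun z => -Real.log z + ∑' n, uFun z n) (Dfun x) x :=
    ((Real.hasDerivAt_log (ne_of_gt hx.1)).neg).add htsum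
  refine hL.congr_of_eventuallyEq ?_
  filter_upwards [Ioi_mem_nhds hx.1] with z hz
  exact logGamma_eq_tsum hz

lemma digamma_eq {θ : ℝ} (hθ : 0 < θ) :
    ∀ x ∈ Set.Ioo (0:ℝ) (θ+1), digamma x = Dfun x := fun x hx =>
  (hasDerivAt_logGamma hθ x hx).deriv

lemma hasDerivAt_Dfun {θ : ℝ} (hθ : 0 < θ) :
    HasDerivAt Dfun (∑' n : ℕ, 1/(θ + n)^2) θ := by
  have htsum : HasDerivAt (fun z => ∑' n, vFun z n) (∑' n : ℕ, 1/(θ+((n:ℝ)+1))^2) θ := by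
    refine hasDerivAt_tsum_of_isPreconnected
      (u := fun n : ℕ => 1/((n:ℝ)+1)^2)
      base_summable isOpen_Ioo (convex_Ioo (0:ℝ) (θ+1)).isPreconnected
      (fun n y hy => hasDerivAt_vFun n hy.1) ?_ (y₀ := θ) ⟨hθ, by linarith⟩
      (summable_vFun hθ) ⟨hθ, by linarith⟩
    intro n y hy
    rw [Real.norm_eq_abs, abs_of_nonneg (by positivity)]
    apply one_div_le_one_div_of_le (by positivity)
    nlinarith [hy.1, mul_pos hy.1 (show (0:ℝ) < (n:ℝ)+1 by positivity)]
  have hinv : HasDerivAt (fun z : ℝ => -z⁻¹) (1/(θ+(0:ℕ))^2) θ := by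
    have := (hasDerivAt_inv (ne_of_gt hθ)).neg
    simpa [one_div, Pi.neg_def] using this
  have hsum2 : HasDerivAt Dfun (1/(θ+(0:ℕ))^2 + ∑' n : ℕ, 1/(θ+((n:ℝ)+1))^2) θ :=
    hinv.add htsum
  convert hsum2 using 1
  rw [Summable.tsum_eq_zero_add (summable_shift_sq hθ)]
  norm_num

lemma kappa_eq {θ : ℝ} (hθ : 0 < θ) : kappa θ = ∑' n : ℕ, 1/(θ + n)^2 := by
  have hmem : Set.Ioo (0:ℝ) (θ+1) ∈ 𝓝 θ := isOpen_Ioo.mem_nhds ⟨hθ, by linarith⟩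
  have heq : digamma =ᶠ[𝓝 θ] Dfun := by
    filter_upwards [hmem] with z hz
    exact digamma_eq hθ z hz
  unfold kappa
  rw [heq.deriv_eq]
  exact (hasDerivAt_Dfun hθ).deriv

lemma summable_logterm {x : ℝ} (hx : 0 < x) (y : ℝ) :
    Summable (fun n : ℕ => Real.log (1 + y^2/(x+n)^2)) := by
  refine Summable.of_nonneg_of_le
    (fun n => Real.log_nonneg (le_add_of_nonneg_right (by positivity)))
    (fun n => ?_) ((summable_shift_sq hx).mul_left (y^2))
  have h := log_one_add_le (show (0:ℝ) ≤ y^2/(x+n)^2 by positivity)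
  calc Real.log (1 + y^2/(x+n)^2) ≤ y^2/(x+n)^2 := h
    _ = y^2 * (1/(x+n)^2) := by rw [mul_one_div]

-- |GammaSeq z n| * ∏ sqrt(1+y²/(x+j)²) = GammaSeq x n, for z = x+iy, x>0, n ≥ 1
lemma abs_gammaSeq_eq {x : ℝ} (hx : 0 < x) (y : ℝ) {n : ℕ} (hn : 1 ≤ n) :
    ‖Complex.GammaSeq ((x:ℂ) + (y:ℂ)*Complex.I) n‖
      * ∏ j ∈ Finset.range (n+1), Real.sqrt (1 + y^2/(x+j)^2)
    = Real.GammaSeq x n := by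
  set z : ℂ := (x:ℂ) + (y:ℂ)*Complex.I with hz
  have habs : ‖Complex.GammaSeq z n‖
      = (n:ℝ)^x * (Nat.factorial n : ℝ) / ∏ j ∈ Finset.range (n+1), Real.sqrt ((x+j)^2 + y^2) := by
    unfold Complex.GammaSeq
    rw [norm_div, norm_mul, norm_prod]
    congr 1
    · congr 1
      · have : ((n:ℂ) : ℂ) = (((n:ℝ) : ℂ)) := by push_cast; ring
        rw [this, Complex.norm_cpow_eq_rpow_re_of_pos (by exact_mod_cast hn)]
        congr 1
        simp [hz]
      · simp
    · refine Finset.prod_congr rfl (fun j _ => ?_)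
      have : z + (j:ℂ) = ((x + j : ℝ) : ℂ) + (y:ℝ) * Complex.I := by
        rw [hz]; push_cast; ring
      rw [this, Complex.norm_add_mul_I]
  have hsqrt : ∀ j : ℕ, Real.sqrt ((x+j)^2 + y^2)
      = (x+j) * Real.sqrt (1 + y^2/(x+j)^2) := by
    intro j
    have hxj : (0:ℝ) < x + j := by positivity
    rw [← Real.sqrt_sq hxj.le, ← Real.sqrt_mul (by positivity), Real.sqrt_sq hxj.le]
    congr 1
    field_simp
  have hprod : ∏ j ∈ Finset.range (n+1), Real.sqrt ((x+j)^2 + y^2)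
      = (∏ j ∈ Finset.range (n+1), (x+j)) * ∏ j ∈ Finset.range (n+1), Real.sqrt (1 + y^2/(x+j)^2) := by
    rw [← Finset.prod_mul_distrib]
    exact Finset.prod_congr rfl (fun j _ => hsqrt j)
  rw [habs, hprod]
  unfold Real.GammaSeq
  have c1 : (∏ j ∈ Finset.range (n+1), (x+(j:ℝ))) ≠ 0 :=
    ne_of_gt (Finset.prod_pos (fun j _ => by positivity))
  have c2 : (∏ j ∈ Finset.range (n+1), Real.sqrt (1 + y^2/(x+(j:ℝ))^2)) ≠ 0 :=
    ne_of_gt (Finset.prod_pos (fun j _ => Real.sqrt_pos.2 (by positivity)))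
  field_simp

lemma relog_gamma_eq {x : ℝ} (hx : 0 < x) (y : ℝ) :
    (Complex.log (Complex.Gamma ((x:ℂ) + (y:ℂ)*Complex.I))).re
    = Real.log (Real.Gamma x) - (1/2) * ∑' n : ℕ, Real.log (1 + y^2/(x+n)^2) := by
  set z : ℂ := (x:ℂ) + (y:ℂ)*Complex.I with hz
  have hre : z.re = x := by simp [hz]
  have hΓ : Complex.Gamma z ≠ 0 := Complex.Gamma_ne_zero_of_re_pos (by rw [hre]; exact hx)
  have hΓabs : ‖Complex.Gamma z‖ ≠ 0 := by simpa using hΓ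
  rw [Complex.log_re]
  -- limit 1
  have B1 : Tendsto (fun n => Real.log (‖Complex.GammaSeq z n‖)) atTop
      (𝓝 (Real.log (‖Complex.Gamma z‖))) := by
    have h1 : Tendsto (fun n => ‖Complex.GammaSeq z n‖) atTop
        (𝓝 (‖Complex.Gamma z‖)) :=
      (continuous_norm.tendsto _).comp (Complex.GammaSeq_tendsto_Gamma z)
    exact h1.log hΓabs
  -- limit 2
  have hsum := summable_logterm hx y
  have hpart : Tendsto (fun n : ℕ => ∑ j ∈ Finset.range (n+1), Real.log (1 + y^2/(x+j)^2))
      atTop (𝓝 (∑' n : ℕ, Real.log (1 + y^2/(x+n)^2))) := by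
    have h := hsum.hasSum.tendsto_sum_nat
    exact h.comp (tendsto_add_atTop_nat 1)
  have B2 : Tendsto (fun n : ℕ => Real.log (Real.GammaSeq x n)
        - (1/2) * ∑ j ∈ Finset.range (n+1), Real.log (1 + y^2/(x+j)^2)) atTop
      (𝓝 (Real.log (Real.Gamma x) - (1/2) * ∑' n : ℕ, Real.log (1 + y^2/(x+n)^2))) := by
    exact ((Real.GammaSeq_tendsto_Gamma x).log
      (ne_of_gt (Real.Gamma_pos_of_pos hx))).sub (hpart.const_mul _)
  -- eventual equality
  have heq : (fun n => Real.log (‖Complex.GammaSeq z n‖))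
      =ᶠ[atTop] (fun n : ℕ => Real.log (Real.GammaSeq x n)
        - (1/2) * ∑ j ∈ Finset.range (n+1), Real.log (1 + y^2/(x+j)^2)) := by
    filter_upwards [eventually_ge_atTop 1] with n hn
    have key := abs_gammaSeq_eq hx y hn
    have hP : (0:ℝ) < ∏ j ∈ Finset.range (n+1), Real.sqrt (1 + y^2/(x+(j:ℝ))^2) :=
      Finset.prod_pos (fun j _ => Real.sqrt_pos.2 (by positivity))
    have hG : (0:ℝ) < Real.GammaSeq x n := by
      unfold Real.GammaSeq
      have h1 : (0:ℝ) < (n:ℝ)^x := rpow_pos_of_pos (by exact_mod_cast hn) x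
      have h2 : (0:ℝ) < (Nat.factorial n : ℝ) := by exact_mod_cast Nat.factorial_pos n
      exact div_pos (mul_pos h1 h2) (Finset.prod_pos (fun j _ => by positivity))
    have hA : (0:ℝ) < ‖Complex.GammaSeq z n‖ := by
      by_contra h
      push_neg at h
      have h0 : ‖Complex.GammaSeq z n‖ = 0 :=
        le_antisymm h (norm_nonneg _)
      rw [h0, zero_mul] at key
      exact absurd key.symm (ne_of_gt hG)
    have hlogP : Real.log (∏ j ∈ Finset.range (n+1), Real.sqrt (1 + y^2/(x+(j:ℝ))^2))
        = (1/2) * ∑ j ∈ Finset.range (n+1), Real.log (1 + y^2/(x+(j:ℝ))^2) := by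
      rw [Real.log_prod (fun j _ => ne_of_gt (Real.sqrt_pos.2 (by positivity)))]
      rw [Finset.mul_sum]
      refine Finset.sum_congr rfl (fun j _ => ?_)
      rw [Real.log_sqrt (by positivity)]
      ring
    have := congrArg Real.log key
    rw [Real.log_mul (ne_of_gt hA) (ne_of_gt hP), hlogP] at this
    linarith
  exact tendsto_nhds_unique (B1.congr' heq) B2

lemma hasDerivAt_logsum {θ a : ℝ} (hθ : 0 < θ) (ha : 0 < a) (Y : ℝ) :
    HasDerivAt (fun Z => ∑' n : ℕ, Real.log (1 + θ^2*Z^2/(a+n)^2))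
      (∑' n : ℕ, 2*θ^2*Y/((a+n)^2 + θ^2*Y^2)) Y := by
  have hterm : ∀ (n : ℕ) (Z : ℝ),
      HasDerivAt (fun Z => Real.log (1 + θ^2*Z^2/(a+(n:ℝ))^2))
        (2*θ^2*Z/((a+n)^2 + θ^2*Z^2)) Z := by
    intro n Z
    have han : (0:ℝ) < (a+(n:ℝ))^2 := by positivity
    have hinner : HasDerivAt (fun Z : ℝ => 1 + θ^2*Z^2/(a+(n:ℝ))^2)
        (θ^2*(2*Z)/(a+(n:ℝ))^2) Z := by
      have h := ((hasDerivAt_pow 2 Z).const_mul (θ^2)).div_const ((a+(n:ℝ))^2)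
      have h2 := h.const_add 1
      exact h2.congr_deriv (by norm_num)
    have hpos : (0:ℝ) < 1 + θ^2*Z^2/(a+(n:ℝ))^2 := by positivity
    have h3 := (Real.hasDerivAt_log (ne_of_gt hpos)).comp Z hinner
    exact h3.congr_deriv (by field_simp <;> ring)
  have hbound : ∀ (n : ℕ) (Z : ℝ), Z ∈ Set.Ioo (-(|Y|+1)) (|Y|+1) →
      ‖2*θ^2*Z/((a+(n:ℝ))^2 + θ^2*Z^2)‖ ≤ (2*θ^2*(|Y|+1)) * (1/(a+(n:ℝ))^2) := by
    intro n Z hZ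
    have han : (0:ℝ) < (a+(n:ℝ))^2 := by positivity
    have hZ1 : |Z| ≤ |Y|+1 := by
      rw [abs_le]; exact ⟨hZ.1.le, hZ.2.le⟩
    have hD : (a+(n:ℝ))^2 ≤ (a+(n:ℝ))^2 + θ^2*Z^2 := by nlinarith [sq_nonneg (θ*Z)]
    rw [Real.norm_eq_abs, abs_div, abs_of_nonneg (le_of_lt (lt_of_lt_of_le han hD))]
    rw [div_le_iff₀ (lt_of_lt_of_le han hD)]
    have h1 : |2*θ^2*Z| = 2*θ^2*|Z| := by
      rw [abs_mul, abs_of_nonneg (by positivity : (0:ℝ) ≤ 2*θ^2)]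
    rw [h1, mul_one_div, div_mul_eq_mul_div, le_div_iff₀ han]
    calc 2*θ^2*|Z| * (a+(n:ℝ))^2 ≤ 2*θ^2*(|Y|+1) * (a+(n:ℝ))^2 := by
          nlinarith [mul_le_mul_of_nonneg_left hZ1 (show (0:ℝ) ≤ 2*θ^2*(a+(n:ℝ))^2 by positivity)]
      _ ≤ 2*θ^2*(|Y|+1) * ((a+(n:ℝ))^2 + θ^2*Z^2) := by nlinarith [sq_nonneg (θ*Z), (show (0:ℝ) < 2*θ^2*(|Y|+1) by positivity)]
  refine hasDerivAt_tsum_of_isPreconnected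
    (u := fun n : ℕ => (2*θ^2*(|Y|+1)) * (1/(a+(n:ℝ))^2))
    (((summable_shift_sq ha)).mul_left _) isOpen_Ioo (convex_Ioo _ _).isPreconnected
    (fun n Z _ => hterm n Z) hbound (y₀ := 0) ?_ ?_ ?_
  · exact Set.mem_Ioo.2 ⟨by nlinarith [abs_nonneg Y], by positivity⟩
  · simpa using summable_zero
  · exact Set.mem_Ioo.2 ⟨by nlinarith [neg_abs_le Y], by nlinarith [le_abs_self Y]⟩


/-- For `θ > 0` and `X ≥ 0`: `∂g̃/∂Y` equals the series, which vanishes at `Y = 0` and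
is strictly positive for `Y > 0`, so `Y ↦ g̃(X,Y)` is strictly increasing on `(0,∞)`;
moreover `∂g̃/∂Y(X,Y) ≥ ∂g̃/∂Y(0,Y) = Σ θ³Y³/((θ+n)²((θ+n)²+θ²Y²))` for `Y ≥ 0`. -/
theorem gTilde_vertical_deriv (θ : ℝ) (hθ : 0 < θ) (X : ℝ) (hX : 0 ≤ X) :
    (∀ Y : ℝ, HasDerivAt (fun Y => gTilde θ X Y) (gTildeDerivSeries θ X Y) Y)
    ∧ gTildeDerivSeries θ X 0 = 0
    ∧ (∀ Y : ℝ, 0 < Y → 0 < gTildeDerivSeries θ X Y)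
    ∧ StrictMonoOn (fun Y => gTilde θ X Y) (Set.Ioi 0)
    ∧ (∀ Y : ℝ, 0 ≤ Y → gTildeDerivSeries θ 0 Y ≤ gTildeDerivSeries θ X Y)
    ∧ (∀ Y : ℝ, gTildeDerivSeries θ 0 Y
        = ∑' n : ℕ, θ ^ 3 * Y ^ 3 / ((θ + n) ^ 2 * ((θ + n) ^ 2 + θ ^ 2 * Y ^ 2))) := by
  have ha : 0 < θ + θ * X := by nlinarith
  set a : ℝ := θ + θ * X with ha_def
  have hθa : θ ≤ a := by nlinarith
  have Sθ : Summable (fun n : ℕ => 1/(θ+n)^2) := summable_shift_sq hθ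
  -- summability of the numerator-scaled series
  have Sfrac : ∀ (b c Y : ℝ), 0 < b → 0 ≤ c →
      Summable (fun n : ℕ => θ*Y/((b+n)^2 + c)) := by
    intro b c Y hb hc
    have h1 : Summable (fun n : ℕ => 1/((b+n)^2 + c)) := by
      refine Summable.of_nonneg_of_le (fun n => by positivity) (fun n => ?_)
        (summable_shift_sq hb)
      apply one_div_le_one_div_of_le (by positivity)
      nlinarith [sq_nonneg (b+(n:ℝ))]
    exact (h1.mul_left (θ*Y)).congr (fun n => mul_one_div _ _)
  have S1' : ∀ Y : ℝ, Summable (fun n : ℕ => θ*Y/(θ+n)^2) := fun Y =>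
    (Sθ.mul_left (θ*Y)).congr (fun n => mul_one_div _ _)
  have hY2 : ∀ Y : ℝ, (0:ℝ) ≤ θ^2*Y^2 := fun Y => by positivity
  -- series identity
  have hser : ∀ Y : ℝ, gTildeDerivSeries θ X Y
      = kappa θ * (θ * Y) - ∑' n : ℕ, θ*Y/((a+n)^2 + θ^2*Y^2) := by
    intro Y
    unfold gTildeDerivSeries
    rw [Summable.tsum_sub (S1' Y) (Sfrac a (θ^2*Y^2) Y ha (hY2 Y))]
    congr 1
    rw [kappa_eq hθ, ← tsum_mul_right]
    exact tsum_congr (fun n => by ring)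
  -- rewrite gTilde
  have hfun : (fun Y => gTilde θ X Y) = fun Y =>
      (Real.log (Real.Gamma a) - (1/2) * ∑' n : ℕ, Real.log (1 + θ^2*Y^2/(a+n)^2)
        + fTheta θ * a - kappa θ/2 * (a^2 - θ^2*Y^2))/θ := by
    funext Y
    unfold gTilde gFun
    rw [relog_gamma_eq ha (θ*Y)]
    simp only [mul_pow]
    rw [← ha_def]
  -- derivative
  have hD : ∀ Y : ℝ, HasDerivAt (fun Y => gTilde θ X Y) (gTildeDerivSeries θ X Y) Y := by
    intro Y
    rw [hfun]
    have h1 := hasDerivAt_logsum hθ ha Y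
    have h2 : HasDerivAt (fun Y : ℝ => a^2 - θ^2*Y^2) (-(θ^2*(2*Y^1))) Y :=
      HasDerivAt.const_sub (a^2) ((hasDerivAt_pow 2 Y).const_mul (θ^2))
    have H : HasDerivAt (fun Y : ℝ =>
        (Real.log (Real.Gamma a) - (1/2) * ∑' n : ℕ, Real.log (1 + θ^2*Y^2/(a+n)^2)
          + fTheta θ * a - kappa θ/2 * (a^2 - θ^2*Y^2))/θ)
        ((0 - (1/2) * (∑' n : ℕ, 2*θ^2*Y/((a+n)^2 + θ^2*Y^2)) + 0
          - kappa θ/2 * (-(θ^2*(2*Y^1))))/θ) Y := by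
      exact ((((hasDerivAt_const Y (Real.log (Real.Gamma a))).sub
        (h1.const_mul (1/2))).add (hasDerivAt_const Y (fTheta θ * a))).sub
        (h2.const_mul (kappa θ/2))).div_const θ
    convert H using 1
    rw [hser Y]
    have e1 : (∑' n : ℕ, 2*θ^2*Y/((a+n)^2 + θ^2*Y^2))
        = (2*θ^2*Y) * ∑' n : ℕ, 1/((a+n)^2 + θ^2*Y^2) := by
      rw [← tsum_mul_left]
      exact tsum_congr (fun n => by rw [mul_one_div])
    have e2 : (∑' n : ℕ, θ*Y/((a+n)^2 + θ^2*Y^2))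
        = (θ*Y) * ∑' n : ℕ, 1/((a+n)^2 + θ^2*Y^2) := by
      rw [← tsum_mul_left]
      exact tsum_congr (fun n => by rw [mul_one_div])
    rw [e1, e2]
    field_simp
    ring
  refine ⟨hD, ?_, ?_, ?_, ?_, ?_⟩
  · unfold gTildeDerivSeries
    simp
  · -- positivity
    intro Y hY
    have hterm : ∀ n : ℕ, 0 < θ*Y/(θ+n)^2 - θ*Y/((θ + θ*X + n)^2 + θ^2*Y^2) := by
      intro n
      have h1 : (θ+(n:ℝ))^2 < (θ + θ*X + n)^2 + θ^2*Y^2 := by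
        nlinarith [sq_nonneg (θ*Y), mul_pos hθ hY, Nat.cast_nonneg (α := ℝ) n]
      have h2 : θ*Y/((θ + θ*X + n)^2 + θ^2*Y^2) < θ*Y/(θ+n)^2 :=
        div_lt_div_of_pos_left (mul_pos hθ hY) (by positivity) h1
      linarith
    have hsummable : Summable (fun n : ℕ =>
        θ*Y/(θ+n)^2 - θ*Y/((θ + θ*X + n)^2 + θ^2*Y^2)) :=
      (S1' Y).sub (Sfrac (θ + θ*X) (θ^2*Y^2) Y ha (hY2 Y))
    exact Summable.tsum_pos hsummable (fun n => (hterm n).le) 0 (hterm 0)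
  · -- strict mono
    have hcont : ContinuousOn (fun Y => gTilde θ X Y) (Set.Ioi 0) :=
      fun Y _ => ((hD Y).differentiableAt.continuousAt).continuousWithinAt
    refine strictMonoOn_of_deriv_pos (convex_Ioi 0) hcont ?_
    intro Y hY
    rw [interior_Ioi] at hY
    have hY' : 0 < Y := Set.mem_Ioi.mp hY
    rw [(hD Y).deriv]
    -- reuse positivity proof below: inline
    have hterm : ∀ n : ℕ, 0 < θ*Y/(θ+n)^2 - θ*Y/((θ + θ*X + n)^2 + θ^2*Y^2) := by
      intro n
      have h1 : (θ+(n:ℝ))^2 < (θ + θ*X + n)^2 + θ^2*Y^2 := by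
        nlinarith [sq_nonneg (θ*Y), mul_pos hθ hY', Nat.cast_nonneg (α := ℝ) n]
      have h2 : θ*Y/((θ + θ*X + n)^2 + θ^2*Y^2) < θ*Y/(θ+n)^2 :=
        div_lt_div_of_pos_left (mul_pos hθ hY') (by positivity) h1
      linarith
    have hsummable : Summable (fun n : ℕ =>
        θ*Y/(θ+n)^2 - θ*Y/((θ + θ*X + n)^2 + θ^2*Y^2)) :=
      (S1' Y).sub (Sfrac (θ + θ*X) (θ^2*Y^2) Y ha (hY2 Y))
    exact Summable.tsum_pos hsummable (fun n => (hterm n).le) 0 (hterm 0)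
  · -- monotone in X
    intro Y hY
    unfold gTildeDerivSeries
    have hb0 : (0:ℝ) < θ + θ*0 := by nlinarith
    refine Summable.tsum_le_tsum (fun n => ?_)
      ((S1' Y).sub (Sfrac (θ + θ*0) (θ^2*Y^2) Y hb0 (hY2 Y)))
      ((S1' Y).sub (Sfrac (θ + θ*X) (θ^2*Y^2) Y ha (hY2 Y)))
    have hnum : (0:ℝ) ≤ θ*Y := by positivity
    have hden : (θ + θ*0 + n)^2 + θ^2*Y^2 ≤ (θ + θ*X + n)^2 + θ^2*Y^2 := by
      nlinarith [Nat.cast_nonneg (α := ℝ) n, mul_nonneg hθ.le hX]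
    have : θ*Y/((θ + θ*X + n)^2 + θ^2*Y^2) ≤ θ*Y/((θ + θ*0 + n)^2 + θ^2*Y^2) := by
      apply div_le_div_of_nonneg_left hnum ?_ hden
      nlinarith [Nat.cast_nonneg (α := ℝ) n, sq_nonneg (θ*Y)]
    linarith
  · -- closed form at X = 0
    intro Y
    unfold gTildeDerivSeries
    refine tsum_congr (fun n => ?_)
    have hb : θ + θ*0 + (n:ℝ) = θ + n := by ring
    rw [hb]
    have h1 : (θ+(n:ℝ))^2 ≠ 0 := by positivity
    have h2 : (θ+(n:ℝ))^2 + θ^2*Y^2 ≠ 0 := by positivity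
    field_simp
    ring
end
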